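/- arXiv:1005.0781 — 4 statements merged into one kernel-verified Lean document; each statement's English description precedes it below -/
import Mathlib

section
/- The number of permutations of {1,...,n} having exactly k cycles of the form (a, a+1, ..., a+q-1) (adjacent q-cycles) equals the alternating sum over j from k to floor(n/q) of (-1)^{k+j} * C(j,k) * (n-(q-1)j)! / j!. -/
open Finset

/-- `a` with `a+1`, ..., `a+q-1` (0-indexed) form an adjacent `q`-cycle of `π`. -/
def isAdjCycle (q : ℕ) {n : ℕ} (π : Equiv.Perm (Fin n)) (a : ℕ) : Prop :=
  a + q ≤ n ∧ ∀ i : Fin n, a ≤ i.val → i.val < a + q →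
    (π i).val = if i.val = a + q - 1 then a else i.val + 1

instance (q n : ℕ) (π : Equiv.Perm (Fin n)) (a : ℕ) : Decidable (isAdjCycle q π a) := by
  unfold isAdjCycle; infer_instance

/-- The number of adjacent `q`-cycles of a permutation of `{1,...,n}`. -/
def adjCycleCount (q : ℕ) {n : ℕ} (π : Equiv.Perm (Fin n)) : ℕ :=
  ((Finset.range n).filter (isAdjCycle q π)).card

/-- `numAqC q n k` = number of permutations of `{1,...,n}` with exactly `k` adjacent `q`-cycles. -/
def numAqC (q n k : ℕ) : ℕ :=
  (Finset.univ.filter (fun π : Equiv.Perm (Fin n) => adjCycleCount q π = k)).card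

/-! ### Auxiliary development -/

/-- A set of starting points of pairwise disjoint adjacent `q`-cycles fitting in `[0,n)`. -/
def validT (q n : ℕ) (T : Finset ℕ) : Prop :=
  (∀ a ∈ T, a + q ≤ n) ∧ ∀ a ∈ T, ∀ b ∈ T, a < b → a + q ≤ b

instance (q n : ℕ) (T : Finset ℕ) : Decidable (validT q n T) := by
  unfold validT; infer_instance

/-- The set of points covered by the intervals `[a, a+q)`, `a ∈ T`. -/
def coverSet (q : ℕ) (T : Finset ℕ) : Finset ℕ :=
  T.biUnion (fun a => Finset.Ico a (a + q))

lemma mem_coverSet {q : ℕ} {T : Finset ℕ} {i : ℕ} :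
    i ∈ coverSet q T ↔ ∃ a ∈ T, a ≤ i ∧ i < a + q := by
  simp [coverSet, Finset.mem_Ico]

lemma adj_gap {q n : ℕ} (hq : 1 ≤ q) {π : Equiv.Perm (Fin n)} {a b : ℕ}
    (ha : isAdjCycle q π a) (hb : isAdjCycle q π b) (hab : a < b) : a + q ≤ b := by
  by_contra h
  push_neg at h
  obtain ⟨han, hfa⟩ := ha
  obtain ⟨hbn, hfb⟩ := hb
  have hi : a + q - 1 < n := by omega
  have e1 := hfa ⟨a + q - 1, hi⟩ (by simp; omega) (by simp; omega)
  have e2 := hfb ⟨a + q - 1, hi⟩ (by simp; omega) (by simp; omega)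
  rw [if_pos (by simp)] at e1
  simp only at e2
  split_ifs at e2 with h2 <;> omega

lemma validT_of_adj {q n : ℕ} (hq : 1 ≤ q) {π : Equiv.Perm (Fin n)} {T : Finset ℕ}
    (hT : ∀ a ∈ T, isAdjCycle q π a) : validT q n T :=
  ⟨fun a ha => (hT a ha).1, fun a ha b hb hab => adj_gap hq (hT a ha) (hT b hb) hab⟩

lemma card_coverSet {q n : ℕ} (hq : 1 ≤ q) {T : Finset ℕ} (hT : validT q n T) :
    (coverSet q T).card = q * T.card := by
  rw [coverSet, Finset.card_biUnion]
  · rw [Finset.sum_congr rfl (fun a _ => Nat.card_Ico a (a + q)), Finset.sum_congr rfl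
      (fun a _ => by omega : ∀ a ∈ T, a + q - a = q), Finset.sum_const, smul_eq_mul, mul_comm]
  · intro a ha b hb hab
    rcases Nat.lt_or_ge a b with h | h
    · have := hT.2 a ha b hb h
      simp only [Finset.disjoint_left, Finset.mem_Ico]
      omega
    · have hba : b < a := by omega
      have := hT.2 b hb a ha hba
      simp only [Finset.disjoint_left, Finset.mem_Ico]
      omega

lemma coverSet_subset_range {q n : ℕ} {T : Finset ℕ} (hT : validT q n T) :
    coverSet q T ⊆ Finset.range n := by
  intro i hi
  rw [mem_coverSet] at hi
  obtain ⟨a, ha, h1, h2⟩ := hi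
  have := hT.1 a ha
  simp only [Finset.mem_range]
  omega

lemma mul_card_le {q n : ℕ} (hq : 1 ≤ q) {T : Finset ℕ} (hT : validT q n T) :
    q * T.card ≤ n := by
  calc q * T.card = (coverSet q T).card := (card_coverSet hq hT).symm
    _ ≤ (Finset.range n).card := Finset.card_le_card (coverSet_subset_range hT)
    _ = n := Finset.card_range n

lemma count_le {q n : ℕ} (hq : 1 ≤ q) (π : Equiv.Perm (Fin n)) :
    adjCycleCount q π ≤ n / q := by
  rw [Nat.le_div_iff_mul_le hq, mul_comm]
  exact mul_card_le hq (validT_of_adj hq (fun a ha => (Finset.mem_filter.mp ha).2))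

/-- The adjacent `q`-cycle on `[a, a+q)` as a permutation of `Fin n` (or `1` if it
does not fit). -/
def cyc (q n a : ℕ) : Equiv.Perm (Fin n) :=
  if h : a + q ≤ n ∧ 1 ≤ q then
    (List.ofFn (fun t : Fin q => (⟨a + t.val, by omega⟩ : Fin n))).formPerm
  else 1

lemma cyc_list_nodup {q n a : ℕ} (h : a + q ≤ n) :
    (List.ofFn (fun t : Fin q => (⟨a + t.val, by omega⟩ : Fin n))).Nodup := by
  rw [List.nodup_ofFn]
  intro s t hst
  simp only [Fin.mk.injEq] at hst
  exact Fin.ext (by omega)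

lemma cyc_apply_of_not_mem {q n a : ℕ} {x : Fin n} (hx : x.val < a ∨ a + q ≤ x.val) :
    cyc q n a x = x := by
  rw [cyc]
  split_ifs with h
  · apply List.formPerm_apply_of_notMem
    rw [List.mem_ofFn]
    rintro ⟨t, ht⟩
    rw [Fin.ext_iff] at ht
    simp only at ht
    have := t.isLt
    omega
  · rfl

lemma cyc_apply_mem {q n a : ℕ} (h : a + q ≤ n) (hq : 1 ≤ q) {i : Fin n}
    (h1 : a ≤ i.val) (h2 : i.val < a + q) :
    ((cyc q n a) i).val = if i.val = a + q - 1 then a else i.val + 1 := by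
  rw [cyc, dif_pos ⟨h, hq⟩]
  set l := List.ofFn (fun t : Fin q => (⟨a + t.val, by omega⟩ : Fin n)) with hl
  have hlen : l.length = q := by simp [hl]
  have hidx : i.val - a < l.length := by omega
  have hgetl : ∀ (t : ℕ) (ht : t < l.length), l[t] = (⟨a + t, by omega⟩ : Fin n) := by
    intro t ht
    simp [hl]
  have hi : i = l[i.val - a] := by
    rw [hgetl _ hidx]
    exact Fin.ext (by simp; omega)
  rw [hi, List.formPerm_apply_getElem l (cyc_list_nodup h) _ hidx]
  have hmod : (i.val - a + 1) % l.length < l.length := Nat.mod_lt _ (by omega)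
  rw [hgetl _ hmod]
  simp only [hlen]
  split_ifs with hc
  · have : (i.val - a + 1) % q = 0 := by
      have : i.val - a + 1 = q := by omega
      simp [this]
    simp [this]
  · have : (i.val - a + 1) % q = i.val - a + 1 := Nat.mod_eq_of_lt (by omega)
    simp [this]
    omega

lemma validT_mono {q n : ℕ} {T T' : Finset ℕ} (hsub : T' ⊆ T) (hT : validT q n T) :
    validT q n T' :=
  ⟨fun a ha => hT.1 a (hsub ha), fun a ha b hb hab => hT.2 a (hsub ha) b (hsub hb) hab⟩

/-- There exists a permutation having all `a ∈ T` as adjacent `q`-cycles and fixing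
everything outside the cover of `T`. -/
lemma exists_tau {q n : ℕ} (hq : 1 ≤ q) {T : Finset ℕ} (hT : validT q n T) :
    ∃ τ : Equiv.Perm (Fin n), (∀ a ∈ T, isAdjCycle q τ a) ∧
      ∀ x : Fin n, x.val ∉ coverSet q T → τ x = x := by
  classical
  induction T using Finset.induction_on with
  | empty => exact ⟨1, by simp, by simp⟩
  | @insert a T ha ih =>
    obtain ⟨τ, hadj, hfix⟩ := ih (validT_mono (Finset.subset_insert a T) hT)
    have han : a + q ≤ n := hT.1 a (Finset.mem_insert_self a T)
    have hgap : ∀ b ∈ T, a + q ≤ b ∨ b + q ≤ a := by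
      intro b hb
      have hab : a ≠ b := fun h => ha (h ▸ hb)
      rcases Nat.lt_or_ge a b with h | h
      · exact Or.inl (hT.2 a (Finset.mem_insert_self a T) b (Finset.mem_insert_of_mem hb) h)
      · have : b < a := lt_of_le_of_ne h (fun h' => hab h'.symm)
        exact Or.inr (hT.2 b (Finset.mem_insert_of_mem hb) a (Finset.mem_insert_self a T) this)
    refine ⟨cyc q n a * τ, ?_, ?_⟩
    · intro b hb
      rcases Finset.mem_insert.mp hb with rfl | hbT
      · refine ⟨han, fun i h1 h2 => ?_⟩
        have hfixi : τ i = i := by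
          apply hfix
          rw [mem_coverSet]
          rintro ⟨c, hc, hc1, hc2⟩
          rcases hgap c hc with h | h <;> omega
        show ((cyc q n b) (τ i)).val = _
        rw [hfixi]
        exact cyc_apply_mem han hq h1 h2
      · obtain ⟨hbn, hbf⟩ := hadj b hbT
        refine ⟨hbn, fun i h1 h2 => ?_⟩
        have hv := hbf i h1 h2
        show ((cyc q n a) (τ i)).val = _
        have hout : (τ i).val < a ∨ a + q ≤ (τ i).val := by
          rw [hv]
          rcases hgap b hbT with h | h
          · right; split_ifs <;> omega
          · left; split_ifs <;> omega
        rw [cyc_apply_of_not_mem hout, hv]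
    · intro x hx
      have hx1 : x.val ∉ coverSet q T := by
        intro h
        apply hx
        rw [mem_coverSet] at h ⊢
        obtain ⟨c, hc, h'⟩ := h
        exact ⟨c, Finset.mem_insert_of_mem hc, h'⟩
      have hx2 : x.val < a ∨ a + q ≤ x.val := by
        by_contra h
        push_neg at h
        exact hx (mem_coverSet.mpr ⟨a, Finset.mem_insert_self a T, by omega⟩)
      show (cyc q n a) (τ x) = x
      rw [hfix x hx1, cyc_apply_of_not_mem hx2]

/-- The number of permutations having all of `T` as adjacent `q`-cycles. -/
lemma count_perms {q n : ℕ} (hq : 1 ≤ q) {T : Finset ℕ} (hT : validT q n T) :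
    (Finset.univ.filter (fun π : Equiv.Perm (Fin n) => ∀ a ∈ T, isAdjCycle q π a)).card
      = (n - q * T.card).factorial := by
  classical
  obtain ⟨τ, hτ, -⟩ := exists_tau hq hT
  set C := coverSet q T with hC
  -- characterization: agreeing with τ on the cover
  have hchar : ∀ π : Equiv.Perm (Fin n),
      (∀ a ∈ T, isAdjCycle q π a) ↔ (∀ x : Fin n, x.val ∈ C → π x = τ x) := by
    intro π
    constructor
    · intro h x hx
      obtain ⟨a, haT, h1, h2⟩ := mem_coverSet.mp hx
      have e1 := (h a haT).2 x h1 h2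
      have e2 := (hτ a haT).2 x h1 h2
      exact Fin.ext (e1.trans e2.symm)
    · intro h a haT
      refine ⟨hT.1 a haT, fun i h1 h2 => ?_⟩
      rw [h i (mem_coverSet.mpr ⟨a, haT, h1, h2⟩)]
      exact (hτ a haT).2 i h1 h2
  have hcard : (Finset.univ.filter (fun π : Equiv.Perm (Fin n) => ∀ a ∈ T, isAdjCycle q π a)).card
      = (Finset.univ.filter (fun σ : Equiv.Perm (Fin n) =>
          ∀ x : Fin n, x.val ∈ C → σ x = x)).card := by
    refine Finset.card_nbij' (fun π => τ⁻¹ * π) (fun σ => τ * σ) ?_ ?_ ?_ ?_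
    · intro π hπ
      rw [Finset.mem_coe, Finset.mem_filter] at hπ ⊢
      refine ⟨Finset.mem_univ _, fun x hx => ?_⟩
      have := (hchar π).mp hπ.2 x hx
      simp [Equiv.Perm.mul_apply, this]
    · intro σ hσ
      rw [Finset.mem_coe, Finset.mem_filter] at hσ ⊢
      refine ⟨Finset.mem_univ _, (hchar _).mpr fun x hx => ?_⟩
      simp [Equiv.Perm.mul_apply, hσ.2 x hx]
    · intro π _; group
    · intro σ _; group
  rw [hcard]
  have hp : (Finset.univ.filter (fun σ : Equiv.Perm (Fin n) =>
      ∀ x : Fin n, x.val ∈ C → σ x = x)).card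
      = Fintype.card {σ : Equiv.Perm (Fin n) // ∀ x : Fin n, x.val ∈ C → σ x = x} :=
    (Fintype.card_subtype _).symm
  rw [hp]
  have e1 : {σ : Equiv.Perm (Fin n) // ∀ x : Fin n, x.val ∈ C → σ x = x}
      ≃ {σ : Equiv.Perm (Fin n) // ∀ x : Fin n, ¬ (x.val ∉ C) → σ x = x} :=
    Equiv.subtypeEquivRight (fun σ => by
      constructor
      · intro h x hx; exact h x (not_not.mp hx)
      · intro h x hx; exact h x (not_not.mpr hx))
  have e2 : {σ : Equiv.Perm (Fin n) // ∀ x : Fin n, ¬ (x.val ∉ C) → σ x = x}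
      ≃ Equiv.Perm {x : Fin n // x.val ∉ C} :=
    (Equiv.Perm.subtypeEquivSubtypePerm (fun x : Fin n => x.val ∉ C)).symm
  rw [Fintype.card_congr (e1.trans e2), Fintype.card_perm, Fintype.card_subtype]
  congr 1
  have hfc : (Finset.univ.filter (fun x : Fin n => x.val ∈ C)).card = C.card := by
    refine Finset.card_nbij (fun x => x.val) ?_ ?_ ?_
    · intro x hx; exact (Finset.mem_filter.mp hx).2
    · intro x _ y _ h; exact Fin.ext h
    · intro c hc
      have hcn : c < n := Finset.mem_range.mp (coverSet_subset_range hT hc)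
      exact ⟨⟨c, hcn⟩, by simp [Finset.mem_coe.mp hc], rfl⟩
  have := Finset.card_filter_add_card_filter_not
    (s := (Finset.univ : Finset (Fin n))) (p := fun x : Fin n => x.val ∈ C)
  rw [hfc] at this
  have hCcard : C.card = q * T.card := card_coverSet hq hT
  have : (Finset.univ.filter (fun x : Fin n => ¬ x.val ∈ C)).card = n - q * T.card := by
    have hu : (Finset.univ : Finset (Fin n)).card = n := by simp
    omega
  rw [← this]

/-- Number of valid `j`-subsets. -/
lemma card_validT (q : ℕ) (hq : 1 ≤ q) :
    ∀ N j : ℕ, (((Finset.range N).powersetCard j).filter (validT q N)).card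
      = (N - (q - 1) * j).choose j := by
  intro N
  induction N using Nat.strong_induction_on with
  | _ N ih =>
    intro j
    match j with
    | 0 =>
      have : validT q N ∅ := ⟨by simp, by simp⟩
      simp [Finset.powersetCard_zero, Finset.filter_singleton, this]
    | (j + 1) =>
      have hc : (q - 1) * (j + 1) = (q - 1) * j + (q - 1) := by ring
      rcases Nat.lt_or_ge N q with hNq | hNq
      · -- no valid sets
        have hempty : (((Finset.range N).powersetCard (j+1)).filter (validT q N)) = ∅ := by
          rw [Finset.filter_eq_empty_iff]
          intro T hT hval
          rw [Finset.mem_powersetCard] at hT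
          have : T.Nonempty := Finset.card_pos.mp (by omega)
          obtain ⟨a, haT⟩ := this
          have := hval.1 a haT
          omega
        rw [hempty, Finset.card_empty]
        have h1 : N - (q - 1) * (j + 1) < j + 1 := by omega
        rw [Nat.choose_eq_zero_of_lt h1]
      · -- recurrence
        classical
        rw [← Finset.card_filter_add_card_filter_not
          (s := ((Finset.range N).powersetCard (j+1)).filter (validT q N))
          (p := fun T => N - q ∈ T)]
        have claim2 : ((((Finset.range N).powersetCard (j+1)).filter (validT q N)).filter
              (fun T => N - q ∈ T)).card
            = (((Finset.range (N - q)).powersetCard j).filter (validT q (N - q))).card := by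
          refine Finset.card_nbij' (fun T => T.erase (N - q)) (fun U => insert (N - q) U)
            ?_ ?_ ?_ ?_
          · intro T hT
            simp only [Finset.mem_coe, Finset.mem_filter, Finset.mem_powersetCard] at hT
            obtain ⟨⟨⟨hsub, hcard⟩, hval⟩, hmem⟩ := hT
            have hlt : ∀ a ∈ T, a ≠ N - q → a < N - q := by
              intro a haT hane
              have h1 := hval.1 a haT
              omega
            simp only [Finset.mem_coe, Finset.mem_filter, Finset.mem_powersetCard]
            refine ⟨⟨?_, ?_⟩, ?_, ?_⟩
            · intro a haE
              rw [Finset.mem_erase] at haE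
              exact Finset.mem_range.mpr (hlt a haE.2 haE.1)
            · rw [Finset.card_erase_of_mem hmem, hcard]
              omega
            · intro a haE
              rw [Finset.mem_erase] at haE
              exact hval.2 a haE.2 (N - q) hmem (hlt a haE.2 haE.1)
            · intro a haE b hbE hab
              rw [Finset.mem_erase] at haE hbE
              exact hval.2 a haE.2 b hbE.2 hab
          · intro U hU
            simp only [Finset.mem_coe, Finset.mem_filter, Finset.mem_powersetCard] at hU
            obtain ⟨⟨hsub, hcard⟩, hval⟩ := hU
            have hltall : ∀ a ∈ U, a + q ≤ N - q := hval.1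
            have hnm : N - q ∉ U := by
              intro h
              have := hltall _ h
              omega
            simp only [Finset.mem_coe, Finset.mem_filter, Finset.mem_powersetCard]
            refine ⟨⟨⟨?_, ?_⟩, ?_, ?_⟩, Finset.mem_insert_self _ _⟩
            · intro a haI
              rcases Finset.mem_insert.mp haI with rfl | haU
              · exact Finset.mem_range.mpr (by omega)
              · have := hltall a haU
                exact Finset.mem_range.mpr (by omega)
            · rw [Finset.card_insert_of_notMem hnm, hcard]
            · intro a haI
              rcases Finset.mem_insert.mp haI with rfl | haU
              · omega
              · have := hltall a haU
                omega
            · intro a haI b hbI hab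
              rcases Finset.mem_insert.mp haI with rfl | haU <;>
                rcases Finset.mem_insert.mp hbI with rfl | hbU
              · omega
              · have := hltall b hbU
                omega
              · have := hltall a haU
                omega
              · exact hval.2 a haU b hbU hab
          · intro T hT
            simp only [Finset.mem_coe, Finset.mem_filter] at hT
            exact Finset.insert_erase hT.2
          · intro U hU
            simp only [Finset.mem_coe, Finset.mem_filter, Finset.mem_powersetCard] at hU
            apply Finset.erase_insert
            intro h
            have := hU.2.1 _ h
            omega
        have claim1 : ((((Finset.range N).powersetCard (j+1)).filter (validT q N)).filter
              (fun T => ¬ N - q ∈ T))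
            = (((Finset.range (N - 1)).powersetCard (j+1)).filter (validT q (N - 1))) := by
          ext T
          simp only [Finset.mem_filter, Finset.mem_powersetCard]
          constructor
          · rintro ⟨⟨⟨hsub, hcard⟩, hval⟩, hnm⟩
            refine ⟨⟨?_, hcard⟩, ?_, hval.2⟩
            · intro a haT
              have h1 := hval.1 a haT
              have h2 : a ≠ N - q := fun h => hnm (h ▸ haT)
              exact Finset.mem_range.mpr (by omega)
            · intro a haT
              have h1 := hval.1 a haT
              have h2 : a ≠ N - q := fun h => hnm (h ▸ haT)
              omega
          · rintro ⟨⟨hsub, hcard⟩, hval⟩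
            have hall : ∀ a ∈ T, a + q ≤ N - 1 := hval.1
            refine ⟨⟨⟨?_, hcard⟩, ?_, hval.2⟩, ?_⟩
            · intro a haT
              have := hall a haT
              exact Finset.mem_range.mpr (by omega)
            · intro a haT
              have := hall a haT
              omega
            · intro h
              have := hall _ h
              omega
        rw [claim1, claim2, ih (N - q) (by omega) j, ih (N - 1) (by omega) (j + 1)]
        rcases Nat.lt_or_ge N ((q - 1) * (j + 1) + 1) with hm | hm
        · have h1 : N - (q - 1) * (j + 1) < j + 1 := by omega
          have h2 : (N - 1) - (q - 1) * (j + 1) < j + 1 := by omega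
          have h3 : (N - q) - (q - 1) * j < j := by
            rcases Nat.eq_zero_or_pos j with rfl | hj
            · omega
            · omega
          rw [Nat.choose_eq_zero_of_lt h1, Nat.choose_eq_zero_of_lt h2,
            Nat.choose_eq_zero_of_lt h3]
        · have e1 : N - (q - 1) * (j + 1) = ((N - 1) - (q - 1) * (j + 1)) + 1 := by omega
          have e2 : (N - q) - (q - 1) * j = (N - 1) - (q - 1) * (j + 1) := by omega
          rw [e1, e2, Nat.choose_succ_succ]

lemma sum_choose_count {q n : ℕ} (hq : 1 ≤ q) (j : ℕ) :
    ∑ π : Equiv.Perm (Fin n), (adjCycleCount q π).choose j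
      = (n - (q - 1) * j).choose j * (n - q * j).factorial := by
  classical
  have step1 : ∀ π : Equiv.Perm (Fin n), (adjCycleCount q π).choose j
      = ∑ T ∈ (Finset.range n).powersetCard j,
          (if ∀ a ∈ T, isAdjCycle q π a then 1 else 0) := by
    intro π
    rw [adjCycleCount, ← Finset.card_powersetCard]
    have hset : ((Finset.range n).filter (isAdjCycle q π)).powersetCard j
        = ((Finset.range n).powersetCard j).filter
            (fun T => ∀ a ∈ T, isAdjCycle q π a) := by
      ext T
      simp only [Finset.mem_powersetCard, Finset.mem_filter]
      constructor
      · rintro ⟨hsub, hcard⟩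
        exact ⟨⟨fun a ha => (Finset.mem_filter.mp (hsub ha)).1, hcard⟩,
          fun a ha => (Finset.mem_filter.mp (hsub ha)).2⟩
      · rintro ⟨⟨hsub, hcard⟩, hall⟩
        exact ⟨fun a ha => Finset.mem_filter.mpr ⟨hsub ha, hall a ha⟩, hcard⟩
    rw [hset, Finset.card_filter]
  calc ∑ π : Equiv.Perm (Fin n), (adjCycleCount q π).choose j
      = ∑ π : Equiv.Perm (Fin n), ∑ T ∈ (Finset.range n).powersetCard j,
          (if ∀ a ∈ T, isAdjCycle q π a then 1 else 0) :=
        Finset.sum_congr rfl (fun π _ => step1 π)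
    _ = ∑ T ∈ (Finset.range n).powersetCard j, ∑ π : Equiv.Perm (Fin n),
          (if ∀ a ∈ T, isAdjCycle q π a then 1 else 0) := Finset.sum_comm
    _ = ∑ T ∈ (Finset.range n).powersetCard j,
          (if validT q n T then (n - q * T.card).factorial else 0) := by
        refine Finset.sum_congr rfl (fun T hT => ?_)
        rw [← Finset.card_filter]
        split_ifs with hv
        · exact count_perms hq hv
        · rw [Finset.card_eq_zero, Finset.filter_eq_empty_iff]
          intro π _
          exact fun hall => hv (validT_of_adj hq hall)
    _ = ∑ T ∈ ((Finset.range n).powersetCard j).filter (validT q n),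
          (n - q * T.card).factorial := (Finset.sum_filter _ _).symm
    _ = ∑ T ∈ ((Finset.range n).powersetCard j).filter (validT q n),
          (n - q * j).factorial := by
        refine Finset.sum_congr rfl (fun T hT => ?_)
        rw [(Finset.mem_powersetCard.mp (Finset.mem_filter.mp hT).1).2]
    _ = _ := by
        rw [Finset.sum_const, card_validT q hq n j, smul_eq_mul]

lemma aqc_inner_sum (c k M : ℕ) (hc : c ≤ M) :
    ∑ j ∈ Finset.Icc k M, (-1 : ℚ) ^ (k + j) * (j.choose k) * (c.choose j)
      = if c = k then 1 else 0 := by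
  rcases Nat.lt_or_ge c k with hck | hck
  · rw [if_neg (by omega)]
    refine Finset.sum_eq_zero (fun j hj => ?_)
    have hkj : k ≤ j := (Finset.mem_Icc.mp hj).1
    rw [Nat.choose_eq_zero_of_lt (show c < j by omega)]
    simp
  · have hsub : ∑ j ∈ Finset.Icc k M, (-1 : ℚ) ^ (k + j) * (j.choose k) * (c.choose j)
        = ∑ j ∈ Finset.Icc k c, (-1 : ℚ) ^ (k + j) * (j.choose k) * (c.choose j) := by
      refine (Finset.sum_subset (Finset.Icc_subset_Icc_right hc) (fun j hj hj' => ?_)).symm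
      have h1 : k ≤ j := (Finset.mem_Icc.mp hj).1
      have h2 : c < j := by
        rcases Nat.lt_or_ge c j with h | h
        · exact h
        · exact absurd (Finset.mem_Icc.mpr ⟨h1, h⟩) hj'
      rw [Nat.choose_eq_zero_of_lt h2]
      simp
    rw [hsub, ← Finset.Ico_add_one_right_eq_Icc, Finset.sum_Ico_eq_sum_range]
    have hterm : ∀ i ∈ Finset.range (c + 1 - k),
        (-1 : ℚ) ^ (k + (k + i)) * ((k + i).choose k) * (c.choose (k + i))
          = (c.choose k : ℚ) * ((-1 : ℚ) ^ i * ((c - k).choose i)) := by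
      intro i hi
      have hik : k + i ≤ c := by
        have := Finset.mem_range.mp hi
        omega
      have hmul := Nat.choose_mul (n := c) (k := k + i) (s := k) (Nat.le_add_right k i)
      have hik2 : k + i - k = i := by omega
      rw [hik2] at hmul
      have hsign : (-1 : ℚ) ^ (k + (k + i)) = (-1 : ℚ) ^ i := by
        have h2k : k + (k + i) = 2 * k + i := by ring
        rw [h2k, pow_add, pow_mul, neg_one_sq, one_pow, one_mul]
      rw [hsign]
      have hcast : ((c.choose (k + i)) : ℚ) * ((k + i).choose k)
          = (c.choose k : ℚ) * ((c - k).choose i) := by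
        exact_mod_cast congrArg (Nat.cast : ℕ → ℚ) hmul
      calc (-1 : ℚ) ^ i * ((k + i).choose k) * (c.choose (k + i))
          = (-1 : ℚ) ^ i * (((c.choose (k + i)) : ℚ) * ((k + i).choose k)) := by ring
        _ = (-1 : ℚ) ^ i * ((c.choose k : ℚ) * ((c - k).choose i)) := by rw [hcast]
        _ = (c.choose k : ℚ) * ((-1 : ℚ) ^ i * ((c - k).choose i)) := by ring
    rw [Finset.sum_congr rfl hterm, ← Finset.mul_sum]
    have hrange : c + 1 - k = (c - k) + 1 := by omega
    rw [hrange]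
    have hQ : ∑ i ∈ Finset.range ((c - k) + 1), (-1 : ℚ) ^ i * ((c - k).choose i)
        = if c - k = 0 then 1 else 0 := by
      have hint := Int.alternating_sum_range_choose (n := c - k)
      have hc2 : ∑ i ∈ Finset.range ((c - k) + 1), (-1 : ℚ) ^ i * ((c - k).choose i)
          = ((∑ i ∈ Finset.range ((c - k) + 1), (-1 : ℤ) ^ i * ((c - k).choose i) : ℤ) : ℚ) := by
        push_cast
        rfl
      rw [hc2, hint]
      split_ifs <;> simp
    rw [hQ]
    rcases Nat.eq_or_lt_of_le hck with rfl | hlt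
    · simp
    · rw [if_neg (by omega), if_neg (by omega), mul_zero]

theorem stmt0 (n q k : ℕ) (hq : 1 ≤ q) (hqn : q ≤ n) :
    (numAqC q n k : ℚ) =
      ∑ j ∈ Finset.Icc k (n / q),
        (-1 : ℚ) ^ (k + j) * (j.choose k) * ((n - (q - 1) * j).factorial : ℚ) / (j.factorial : ℚ) := by
  classical
  have hq0 : 0 < q := hq
  have key : ∀ j ∈ Finset.Icc k (n / q),
      ((n - (q - 1) * j).factorial : ℚ) / (j.factorial : ℚ)
        = ((n - (q - 1) * j).choose j : ℚ) * ((n - q * j).factorial : ℚ) := by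
    intro j hj
    have hjle : j ≤ n / q := (Finset.mem_Icc.mp hj).2
    have hjq : q * j ≤ n := by
      rw [mul_comm]
      exact (Nat.le_div_iff_mul_le hq0).mp hjle
    have h1 : (q - 1) * j = q * j - j := by rw [Nat.sub_mul, one_mul]
    have h2 : j ≤ q * j := Nat.le_mul_of_pos_left j hq0
    have hjm : j ≤ n - (q - 1) * j := by omega
    have hfact := Nat.choose_mul_factorial_mul_factorial hjm
    have hsubeq : n - (q - 1) * j - j = n - q * j := by omega
    rw [hsubeq] at hfact
    rw [← hfact]
    push_cast
    field_simp
  have lhs : (numAqC q n k : ℚ) = ∑ π : Equiv.Perm (Fin n),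
      (if adjCycleCount q π = k then (1 : ℚ) else 0) := by
    rw [numAqC, Finset.card_filter, Nat.cast_sum]
    exact Finset.sum_congr rfl (fun π _ => by split_ifs <;> simp)
  rw [lhs]
  have hper : ∀ π : Equiv.Perm (Fin n), (if adjCycleCount q π = k then (1 : ℚ) else 0)
      = ∑ j ∈ Finset.Icc k (n / q),
          (-1 : ℚ) ^ (k + j) * (j.choose k) * ((adjCycleCount q π).choose j) := by
    intro π
    rw [aqc_inner_sum (adjCycleCount q π) k (n / q) (count_le hq π)]
  rw [Finset.sum_congr rfl (fun π _ => hper π), Finset.sum_comm]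
  refine Finset.sum_congr rfl (fun j hj => ?_)
  simp_rw [mul_assoc]
  rw [← Finset.mul_sum, ← Finset.mul_sum]
  have hcast : ∑ π : Equiv.Perm (Fin n), ((adjCycleCount q π).choose j : ℚ)
      = ((n - (q - 1) * j).choose j : ℚ) * ((n - q * j).factorial : ℚ) := by
    exact_mod_cast congrArg (Nat.cast : ℕ → ℚ) (sum_choose_count (n := n) hq j)
  rw [hcast, ← key j hj]
  ring
end

section
/- If q divides n, then k * a(n+q-1, k) = a(n, k-1) + (-1)^{k + n/q} * C(n/q, k-1); if q does not divide n, then k * a(n+q-1, k) = a(n, k-1). -/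
open Finset

namespace AqC

def Valid (q m : ℕ) (T : Finset ℕ) : Prop :=
  (∀ a ∈ T, a + q ≤ m) ∧ ∀ a ∈ T, ∀ b ∈ T, a < b → a + q ≤ b

instance (q m : ℕ) (T : Finset ℕ) : Decidable (Valid q m T) := by
  unfold Valid; infer_instance

def Uset (q : ℕ) (T : Finset ℕ) : Finset ℕ := T.biUnion fun a => Finset.Ico a (a + q)

lemma mem_Uset {q : ℕ} {T : Finset ℕ} {i : ℕ} :
    i ∈ Uset q T ↔ ∃ a ∈ T, a ≤ i ∧ i < a + q := by
  simp [Uset, Finset.mem_biUnion, Finset.mem_Ico]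

lemma block_unique {q m : ℕ} {T : Finset ℕ} (hv : Valid q m T) {a b i : ℕ}
    (ha : a ∈ T) (hb : b ∈ T) (h1 : a ≤ i) (h2 : i < a + q) (h3 : b ≤ i) (h4 : i < b + q) :
    a = b := by
  rcases lt_trichotomy a b with h | h | h
  · have := hv.2 a ha b hb h; omega
  · exact h
  · have := hv.2 b hb a ha h; omega

lemma Uset_card {q m : ℕ} {T : Finset ℕ} (hv : Valid q m T) :
    (Uset q T).card = q * T.card := by
  rw [Uset, Finset.card_biUnion]
  · simp [Nat.Ico_eq_range', mul_comm]
  · intro a ha b hb hab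
    apply Finset.disjoint_left.2
    intro i hia hib
    simp only [Finset.mem_Ico] at hia hib
    exact hab (block_unique hv ha hb hia.1 hia.2 hib.1 hib.2)

lemma Uset_subset_range {q m : ℕ} {T : Finset ℕ} (hv : Valid q m T) :
    Uset q T ⊆ Finset.range m := by
  intro i hi
  rcases mem_Uset.1 hi with ⟨a, ha, h1, h2⟩
  have := hv.1 a ha
  simp only [Finset.mem_range]; omega

def fN (q : ℕ) (T : Finset ℕ) (i : ℕ) : ℕ :=
  if i + 1 ∈ T ∨ i + 1 ∉ Uset q T then i + 1 - q else i + 1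

def gN (q : ℕ) (T : Finset ℕ) (j : ℕ) : ℕ :=
  if j ∈ T then j + q - 1 else j - 1

lemma fN_spec {q m : ℕ} (hq : 1 ≤ q) {T : Finset ℕ} (hv : Valid q m T) {a i : ℕ}
    (ha : a ∈ T) (h1 : a ≤ i) (h2 : i < a + q) :
    fN q T i = if i = a + q - 1 then a else i + 1 := by
  rcases eq_or_ne i (a + q - 1) with h | h
  · have hcond : i + 1 ∈ T ∨ i + 1 ∉ Uset q T := by
      by_cases hU : i + 1 ∈ Uset q T
      · left
        rcases mem_Uset.1 hU with ⟨b, hb, hb1, hb2⟩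
        have hab : a < b := by
          by_contra hc
          push_neg at hc
          rcases eq_or_lt_of_le hc with rfl | hlt
          · omega
          · have := hv.2 b hb a ha hlt; omega
        have := hv.2 a ha b hb hab
        have : b = i + 1 := by omega
        exact this ▸ hb
      · right; exact hU
    rw [fN, if_pos hcond, if_pos h]; omega
  · have hcond : ¬(i + 1 ∈ T ∨ i + 1 ∉ Uset q T) := by
      push_neg
      constructor
      · intro hT
        have hab : a < i + 1 := by omega
        have := hv.2 a ha (i+1) hT hab
        omega
      · exact mem_Uset.2 ⟨a, ha, by omega, by omega⟩
    rw [fN, if_neg hcond, if_neg h]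

lemma fN_mem {q m : ℕ} (hq : 1 ≤ q) {T : Finset ℕ} (hv : Valid q m T) {i : ℕ}
    (hi : i ∈ Uset q T) : fN q T i ∈ Uset q T := by
  rcases mem_Uset.1 hi with ⟨a, ha, h1, h2⟩
  rw [fN_spec hq hv ha h1 h2]
  split
  · exact mem_Uset.2 ⟨a, ha, le_rfl, by omega⟩
  · exact mem_Uset.2 ⟨a, ha, by omega, by omega⟩

lemma gN_mem {q m : ℕ} (hq : 1 ≤ q) {T : Finset ℕ} (hv : Valid q m T) {j : ℕ}
    (hj : j ∈ Uset q T) : gN q T j ∈ Uset q T := by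
  rcases mem_Uset.1 hj with ⟨a, ha, h1, h2⟩
  rw [gN]
  split
  · next hT => exact mem_Uset.2 ⟨j, hT, by omega, by omega⟩
  · next hT =>
    have : a < j := lt_of_le_of_ne h1 (fun h => hT (h ▸ ha))
    exact mem_Uset.2 ⟨a, ha, by omega, by omega⟩

lemma gN_fN {q m : ℕ} (hq : 1 ≤ q) {T : Finset ℕ} (hv : Valid q m T) {i : ℕ}
    (hi : i ∈ Uset q T) : gN q T (fN q T i) = i := by
  rcases mem_Uset.1 hi with ⟨a, ha, h1, h2⟩
  rw [fN_spec hq hv ha h1 h2]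
  split
  · next h => rw [gN, if_pos ha]; omega
  · next h =>
    have hT : i + 1 ∉ T := by
      intro hT
      have hab : a < i + 1 := by omega
      have := hv.2 a ha (i+1) hT hab
      omega
    rw [gN, if_neg hT]; omega

lemma fN_gN {q m : ℕ} (hq : 1 ≤ q) {T : Finset ℕ} (hv : Valid q m T) {j : ℕ}
    (hj : j ∈ Uset q T) : fN q T (gN q T j) = j := by
  rcases mem_Uset.1 hj with ⟨a, ha, h1, h2⟩
  rw [gN]
  split
  · next hT =>
    have haj : a = j := block_unique hv ha hT h1 h2 le_rfl (by omega)
    subst haj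
    rw [fN_spec hq hv ha (by omega) (by omega), if_pos (by omega)]
  · next hT =>
    have haj : a < j := lt_of_le_of_ne h1 (fun h => hT (h ▸ ha))
    rw [fN_spec hq hv ha (by omega) (by omega), if_neg (by omega)]
    omega

def blockPerm (q m : ℕ) (T : Finset ℕ) (hq : 1 ≤ q) (hv : Valid q m T) :
    Equiv.Perm {x : Fin m // x.val ∈ Uset q T} where
  toFun x := ⟨⟨fN q T x.1.1, by
      have := Uset_subset_range hv (fN_mem hq hv x.2)
      simpa using this⟩, fN_mem hq hv x.2⟩
  invFun x := ⟨⟨gN q T x.1.1, by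
      have := Uset_subset_range hv (gN_mem hq hv x.2)
      simpa using this⟩, gN_mem hq hv x.2⟩
  left_inv x := by
    ext
    exact gN_fN hq hv x.2
  right_inv x := by
    ext
    exact fN_gN hq hv x.2


lemma pi_val {q m : ℕ} (hq : 1 ≤ q) {T : Finset ℕ} (hv : Valid q m T)
    {π : Equiv.Perm (Fin m)} (hπ : ∀ a ∈ T, isAdjCycle q π a) {x : Fin m}
    (hx : x.val ∈ Uset q T) : (π x).val = fN q T x.val := by
  rcases mem_Uset.1 hx with ⟨a, ha, h1, h2⟩
  rw [fN_spec hq hv ha h1 h2, (hπ a ha).2 x h1 h2]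

lemma pi_mem_iff {q m : ℕ} (hq : 1 ≤ q) {T : Finset ℕ} (hv : Valid q m T)
    {π : Equiv.Perm (Fin m)} (hπ : ∀ a ∈ T, isAdjCycle q π a) (x : Fin m) :
    x.val ∈ Uset q T ↔ (π x).val ∈ Uset q T := by
  classical
  set V : Finset (Fin m) := Finset.univ.filter (fun x : Fin m => x.val ∈ Uset q T) with hV
  have hmemV : ∀ y : Fin m, y ∈ V ↔ y.val ∈ Uset q T := by
    intro y; simp [hV]
  have hfwd : ∀ y ∈ V, π y ∈ V := by
    intro y hy
    rw [hmemV] at hy ⊢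
    rw [pi_val hq hv hπ hy]
    exact fN_mem hq hv hy
  have himg : V.image π = V := by
    apply Finset.eq_of_subset_of_card_le
    · intro y hy
      rcases Finset.mem_image.1 hy with ⟨z, hz, rfl⟩
      exact hfwd z hz
    · rw [Finset.card_image_of_injective _ π.injective]
  constructor
  · intro hx; rw [← hmemV]; exact hfwd x ((hmemV x).2 hx)
  · intro hx
    have : π x ∈ V.image π := by rw [himg]; exact (hmemV _).2 hx
    rcases Finset.mem_image.1 this with ⟨z, hz, hzx⟩
    have : z = x := π.injective hzx
    subst this
    exact (hmemV _).1 hz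

lemma card_pi_fixed {q m : ℕ} (hq : 1 ≤ q) {T : Finset ℕ} (hv : Valid q m T) :
    (Finset.univ.filter (fun π : Equiv.Perm (Fin m) => ∀ a ∈ T, isAdjCycle q π a)).card
      = Nat.factorial (m - q * T.card) := by
  classical
  have key : (Finset.univ.filter
        (fun π : Equiv.Perm (Fin m) => ∀ a ∈ T, isAdjCycle q π a)).card
      = (Finset.univ : Finset (Equiv.Perm {x : Fin m // ¬ (x.val ∈ Uset q T)})).card := by
    refine Finset.card_bij'
      (fun π hπ => π.subtypePerm (p := fun x : Fin m => ¬ (x.val ∈ Uset q T)) ?_)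
      (fun σ _ => (blockPerm q m T hq hv).subtypeCongr σ) (fun _ _ => Finset.mem_univ _)
      ?_ ?_ ?_
    · -- the iff for subtypePerm
      intro x
      have hπ' : ∀ a ∈ T, isAdjCycle q π a := by
        simpa using (Finset.mem_filter.1 hπ).2
      exact not_congr (pi_mem_iff hq hv hπ' x).symm
    · -- backward map lands in filter
      intro σ _
      simp only [Finset.mem_filter, Finset.mem_univ, true_and]
      intro a ha
      refine ⟨hv.1 a ha, ?_⟩
      intro i hi1 hi2
      have hiU : i.val ∈ Uset q T := mem_Uset.2 ⟨a, ha, hi1, hi2⟩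
      rw [Equiv.Perm.subtypeCongr.left_apply (a := i) _ _ hiU]
      show fN q T i.val = _
      rw [fN_spec hq hv ha hi1 hi2]
    · -- left inverse
      intro π hπ
      have hπ' : ∀ a ∈ T, isAdjCycle q π a := by
        simpa using (Finset.mem_filter.1 hπ).2
      apply Equiv.ext
      intro x
      by_cases hx : x.val ∈ Uset q T
      · rw [Equiv.Perm.subtypeCongr.left_apply (a := x) _ _ hx]
        have : (π x).val = fN q T x.val := pi_val hq hv hπ' hx
        apply Fin.ext
        rw [this]
        rfl
      · rw [Equiv.Perm.subtypeCongr.right_apply (a := x) _ _ hx]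
        rfl
    · -- right inverse
      intro σ _
      apply Equiv.ext
      intro x
      apply Subtype.ext
      show ((blockPerm q m T hq hv).subtypeCongr σ) x.val = _
      rw [Equiv.Perm.subtypeCongr.right_apply (a := x.val) _ _ x.2]
  rw [key, Finset.card_univ, Fintype.card_perm, Fintype.card_subtype_compl]
  congr 2
  rw [Fintype.card_fin]
  rw [Fintype.card_subtype]
  rw [← Uset_card hv]
  apply Finset.card_bij (fun (x : Fin m) _ => x.val)
  · intro x hx; simpa using (Finset.mem_filter.1 hx).2
  · intro x hx y hy h; exact Fin.ext h
  · intro u hu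
    have := Uset_subset_range hv hu
    simp only [Finset.mem_range] at this
    exact ⟨⟨u, this⟩, by simpa using hu, rfl⟩


lemma valid_of_subset {q m : ℕ} (hq : 1 ≤ q) {T : Finset ℕ} {π : Equiv.Perm (Fin m)}
    (h : ∀ a ∈ T, isAdjCycle q π a) : Valid q m T := by
  constructor
  · intro a ha; exact (h a ha).1
  · intro a ha b hb hab
    by_contra hc
    push_neg at hc
    have hq1 := (h a ha).1
    have hi : a + q - 1 < m := by omega
    have h2 := (h a ha).2 ⟨a + q - 1, hi⟩ (by simp; omega) (by simp; omega)
    have h3 := (h b hb).2 ⟨a + q - 1, hi⟩ (by simp; omega) (by simp; omega)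
    simp only [Fin.val_mk] at h2 h3
    rw [if_pos trivial] at h2
    rw [if_neg (by omega)] at h3
    omega

def Nmom (q m j : ℕ) : ℕ := ∑ π : Equiv.Perm (Fin m), (adjCycleCount q π).choose j

lemma Nmom_eq {q : ℕ} (hq : 1 ≤ q) (m j : ℕ) :
    Nmom q m j = (((Finset.range m).powersetCard j).filter (Valid q m)).card
      * Nat.factorial (m - q * j) := by
  classical
  have step1 : ∀ π : Equiv.Perm (Fin m), (adjCycleCount q π).choose j
      = (((Finset.range m).powersetCard j).filter
          (fun T => ∀ a ∈ T, isAdjCycle q π a)).card := by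
    intro π
    rw [adjCycleCount, ← Finset.card_powersetCard]
    congr 1
    ext T
    simp only [Finset.mem_powersetCard, Finset.mem_filter]
    constructor
    · rintro ⟨hsub, hcard⟩
      exact ⟨⟨hsub.trans (Finset.filter_subset _ _), hcard⟩,
        fun a ha => (Finset.mem_filter.1 (hsub ha)).2⟩
    · rintro ⟨⟨hsub, hcard⟩, hall⟩
      exact ⟨fun a ha => Finset.mem_filter.2 ⟨hsub ha, hall a ha⟩, hcard⟩
  rw [Nmom, Finset.sum_congr rfl (fun π _ => step1 π)]
  simp_rw [Finset.card_filter]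
  rw [Finset.sum_comm]
  have step2 : ∀ T ∈ (Finset.range m).powersetCard j,
      (∑ π : Equiv.Perm (Fin m), if (∀ a ∈ T, isAdjCycle q π a) then 1 else 0)
        = if Valid q m T then Nat.factorial (m - q * j) else 0 := by
    intro T hT
    have hcard : T.card = j := (Finset.mem_powersetCard.1 hT).2
    rw [← Finset.card_filter]
    by_cases hv : Valid q m T
    · rw [if_pos hv, ← hcard]
      exact card_pi_fixed hq hv
    · rw [if_neg hv, Finset.card_eq_zero]
      rw [Finset.filter_eq_empty_iff]
      intro π _
      exact fun h => hv (valid_of_subset hq h)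
  rw [Finset.sum_congr rfl step2, ← Finset.sum_filter, Finset.sum_const, smul_eq_mul,
    Finset.card_filter]


lemma count_valid {q : ℕ} (hq : 1 ≤ q) : ∀ m j : ℕ,
    (((Finset.range m).powersetCard j).filter (Valid q m)).card
      = (m - (q - 1) * j).choose j := by
  intro m
  induction m using Nat.strong_induction_on with
  | _ m IH =>
    intro j
    match j with
    | 0 =>
      rw [Finset.powersetCard_zero, Nat.choose_zero_right]
      rw [Finset.filter_singleton, if_pos (by constructor <;> simp)]
      simp
    | j + 1 =>
      rcases lt_or_ge m q with hqm | hqm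
      · -- m < q : both sides are zero
        have hlhs : (((Finset.range m).powersetCard (j+1)).filter (Valid q m)).card = 0 := by
          rw [Finset.card_eq_zero, Finset.filter_eq_empty_iff]
          intro T hT hv
          have hcard : T.card = j + 1 := (Finset.mem_powersetCard.1 hT).2
          obtain ⟨a, ha⟩ := Finset.card_pos.1 (by omega : 0 < T.card)
          have := hv.1 a ha
          omega
        rw [hlhs]
        have h1 : q - 1 ≤ (q - 1) * (j + 1) := Nat.le_mul_of_pos_right _ (by omega)
        rcases Nat.eq_or_lt_of_le hq with hq1 | hq2
        · have : m = 0 := by omega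
          subst this
          simp [Nat.choose_eq_zero_of_lt]
        · exact (Nat.choose_eq_zero_of_lt (by omega)).symm
      · -- q ≤ m
        have hm1 : 1 ≤ m := le_trans hq hqm
        set A := ((Finset.range m).powersetCard (j+1)).filter (Valid q m) with hA
        have hsplit : A.card = (A.filter (fun T => m - q ∈ T)).card
            + (A.filter (fun T => m - q ∉ T)).card :=
          (Finset.card_filter_add_card_filter_not _).symm
        have hpart1 : (A.filter (fun T => m - q ∈ T)).card
            = (((Finset.range (m - q)).powersetCard j).filter (Valid q (m - q))).card := by
          refine Finset.card_bij' (fun T _ => T.erase (m - q))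
            (fun T' _ => insert (m - q) T') ?_ ?_ ?_ ?_
          · intro T hT
            simp only [hA, Finset.mem_filter, Finset.mem_powersetCard] at hT
            obtain ⟨⟨⟨hsub, hcard⟩, hv⟩, hmem⟩ := hT
            simp only [Finset.mem_filter, Finset.mem_powersetCard]
            have hlt : ∀ a ∈ T.erase (m - q), a < m - q := by
              intro a ha
              have haT := Finset.mem_of_mem_erase ha
              have hane := Finset.ne_of_mem_erase ha
              rcases lt_trichotomy a (m - q) with h | h | h
              · exact h
              · exact absurd h hane
              · have := hv.2 (m - q) hmem a haT h
                have := hv.1 a haT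
                omega
            refine ⟨⟨?_, ?_⟩, ?_, ?_⟩
            · intro a ha; exact Finset.mem_range.2 (hlt a ha)
            · rw [Finset.card_erase_of_mem hmem, hcard]; omega
            · intro a ha
              have haT := Finset.mem_of_mem_erase ha
              have := hv.2 a haT (m - q) hmem (hlt a ha)
              omega
            · intro a ha b hb hab
              exact hv.2 a (Finset.mem_of_mem_erase ha) b (Finset.mem_of_mem_erase hb) hab
          · intro T' hT'
            simp only [Finset.mem_filter, Finset.mem_powersetCard] at hT'
            obtain ⟨⟨hsub, hcard⟩, hv⟩ := hT'
            have hnm : m - q ∉ T' := by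
              intro h
              have := Finset.mem_range.1 (hsub h)
              omega
            simp only [hA, Finset.mem_filter, Finset.mem_powersetCard]
            have hbound : ∀ a ∈ T', a + q ≤ m - q := hv.1
            refine ⟨⟨⟨?_, ?_⟩, ?_, ?_⟩, Finset.mem_insert_self _ _⟩
            · intro a ha
              rcases Finset.mem_insert.1 ha with rfl | ha'
              · exact Finset.mem_range.2 (by omega)
              · have := hbound a ha'; exact Finset.mem_range.2 (by omega)
            · rw [Finset.card_insert_of_notMem hnm, hcard]
            · intro a ha
              rcases Finset.mem_insert.1 ha with rfl | ha'
              · omega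
              · have := hbound a ha'; omega
            · intro a ha b hb hab
              rcases Finset.mem_insert.1 ha with rfl | ha' <;>
                rcases Finset.mem_insert.1 hb with rfl | hb'
              · omega
              · have := hbound b hb'; omega
              · have := hbound a ha'; omega
              · exact hv.2 a ha' b hb' hab
          · intro T hT
            simp only [hA, Finset.mem_filter] at hT
            exact Finset.insert_erase hT.2
          · intro T' hT'
            simp only [Finset.mem_filter, Finset.mem_powersetCard] at hT'
            have hnm : m - q ∉ T' := by
              intro h
              have := Finset.mem_range.1 (hT'.1.1 h)
              omega
            exact Finset.erase_insert hnm
        have hpart2 : (A.filter (fun T => m - q ∉ T)).card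
            = (((Finset.range (m-1)).powersetCard (j+1)).filter (Valid q (m-1))).card := by
          congr 1
          ext T
          simp only [hA, Finset.mem_filter, Finset.mem_powersetCard]
          constructor
          · rintro ⟨⟨⟨hsub, hcard⟩, hv⟩, hnm⟩
            have hbound : ∀ a ∈ T, a + q ≤ m - 1 := by
              intro a ha
              have h1 := hv.1 a ha
              have : a ≠ m - q := fun h => hnm (h ▸ ha)
              omega
            refine ⟨⟨?_, hcard⟩, ?_, hv.2⟩
            · intro a ha
              have := hbound a ha
              exact Finset.mem_range.2 (by omega)
            · exact hbound
          · rintro ⟨⟨hsub, hcard⟩, hv⟩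
            have hnm : m - q ∉ T := by
              intro h
              have := hv.1 _ h
              omega
            refine ⟨⟨⟨?_, hcard⟩, ?_, hv.2⟩, hnm⟩
            · intro a ha
              have := Finset.mem_range.1 (hsub ha)
              exact Finset.mem_range.2 (by omega)
            · intro a ha
              have := hv.1 a ha
              omega
        rw [hsplit, hpart1, hpart2, IH (m - q) (by omega) j, IH (m - 1) (by omega) (j + 1)]
        have hbc : (q - 1) * (j + 1) = (q - 1) * j + (q - 1) := by ring
        rcases lt_or_ge ((q - 1) * (j + 1)) m with hbm | hbm
        · have e1 : m - (q - 1) * (j + 1) = (m - 1 - (q - 1) * (j + 1)) + 1 := by omega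
          have e2 : m - q - (q - 1) * j = m - 1 - (q - 1) * (j + 1) := by omega
          rw [e1, e2, Nat.choose_succ_succ]
        · have hj1 : 1 ≤ j := by
            by_contra hc
            push_neg at hc
            interval_cases j
            simp at hbc
            omega
          have e1 : m - (q - 1) * (j + 1) = 0 := by omega
          have e2 : m - 1 - (q - 1) * (j + 1) = 0 := by omega
          have e3 : m - q - (q - 1) * j = 0 := by omega
          have c1 : Nat.choose 0 (j + 1) = 0 := Nat.choose_eq_zero_of_lt (by omega)
          have c2 : Nat.choose 0 j = 0 := Nat.choose_eq_zero_of_lt (by omega)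
          rw [e1, e2, e3, c1, c2]


lemma orth (c k m : ℕ) (hc : c ≤ m) :
    ∑ j ∈ Finset.range (m + 1), (-1 : ℤ) ^ j * (j.choose k) * (c.choose j)
      = if c = k then (-1 : ℤ) ^ k else 0 := by
  rcases le_or_gt k c with hk | hk
  · have hsub : Finset.Ico k (c + 1) ⊆ Finset.range (m + 1) := by
      intro x hx
      simp only [Finset.mem_Ico] at hx
      simp only [Finset.mem_range]
      omega
    have hvan : ∀ x ∈ Finset.range (m + 1), x ∉ Finset.Ico k (c + 1) →
        (-1 : ℤ) ^ x * (x.choose k) * (c.choose x) = 0 := by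
      intro x _ hx
      simp only [Finset.mem_Ico, not_and, not_lt] at hx
      rcases lt_or_ge x k with h | h
      · rw [Nat.choose_eq_zero_of_lt h]
        push_cast; ring
      · rw [Nat.choose_eq_zero_of_lt (by omega : c < x)]
        push_cast; ring
    rw [← Finset.sum_subset hsub hvan, Finset.sum_Ico_eq_sum_range]
    have hterm : ∀ i ∈ Finset.range (c + 1 - k),
        (-1 : ℤ) ^ (k + i) * ((k + i).choose k) * (c.choose (k + i))
          = ((-1 : ℤ) ^ k * (c.choose k)) * ((-1 : ℤ) ^ i * ((c - k).choose i)) := by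
      intro i hi
      have hik : k + i ≤ c := by
        simp only [Finset.mem_range] at hi; omega
      have hmul := Nat.choose_mul (n := c) (Nat.le_add_right k i)
      have e : k + i - k = i := by omega
      rw [e] at hmul
      have : ((k + i).choose k : ℤ) * (c.choose (k + i)) =
          (c.choose k : ℤ) * ((c - k).choose i) := by
        exact_mod_cast congrArg (Nat.cast : ℕ → ℤ) (by rw [mul_comm]; exact hmul)
      rw [pow_add]
      linear_combination ((-1 : ℤ) ^ k * (-1 : ℤ) ^ i) * this
    rw [Finset.sum_congr rfl hterm, ← Finset.mul_sum]
    have e2 : c + 1 - k = (c - k) + 1 := by omega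
    rw [e2, Int.alternating_sum_range_choose]
    rcases eq_or_ne c k with rfl | hne
    · simp
    · rw [if_neg (by omega), if_neg hne, mul_zero]
  · rw [if_neg (by omega)]
    apply Finset.sum_eq_zero
    intro j hj
    rcases le_or_gt j c with h | h
    · rw [Nat.choose_eq_zero_of_lt (by omega : j < k)]
      push_cast; ring
    · rw [Nat.choose_eq_zero_of_lt h]
      push_cast; ring

lemma moments (q m k : ℕ) :
    ∑ j ∈ Finset.range (m + 1), (-1 : ℤ) ^ j * (j.choose k) * (Nmom q m j : ℤ)
      = (-1 : ℤ) ^ k * (numAqC q m k : ℤ) := by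
  classical
  have expand : ∀ j, (Nmom q m j : ℤ)
      = ∑ π : Equiv.Perm (Fin m), ((adjCycleCount q π).choose j : ℤ) := by
    intro j; rw [Nmom]; push_cast; ring
  calc ∑ j ∈ Finset.range (m + 1), (-1 : ℤ) ^ j * (j.choose k) * (Nmom q m j : ℤ)
      = ∑ j ∈ Finset.range (m + 1), ∑ π : Equiv.Perm (Fin m),
          (-1 : ℤ) ^ j * (j.choose k) * ((adjCycleCount q π).choose j : ℤ) := by
        refine Finset.sum_congr rfl fun j _ => ?_
        rw [expand j, Finset.mul_sum]
    _ = ∑ π : Equiv.Perm (Fin m), ∑ j ∈ Finset.range (m + 1),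
          (-1 : ℤ) ^ j * (j.choose k) * ((adjCycleCount q π).choose j : ℤ) :=
        Finset.sum_comm
    _ = ∑ π : Equiv.Perm (Fin m), (if adjCycleCount q π = k then (-1 : ℤ) ^ k else 0) := by
        refine Finset.sum_congr rfl fun π _ => ?_
        exact orth _ k m ((Finset.card_filter_le _ _).trans (by simp))
    _ = (-1 : ℤ) ^ k * (numAqC q m k : ℤ) := by
        rw [← Finset.sum_filter, Finset.sum_const, numAqC]
        simp [mul_comm]

lemma Nmom_formula {q : ℕ} (hq : 1 ≤ q) (m j : ℕ) :
    Nmom q m j = (m - (q - 1) * j).choose j * Nat.factorial (m - q * j) := by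
  rw [Nmom_eq hq, count_valid hq]

lemma numAqC_eq {q : ℕ} (hq : 1 ≤ q) (m k : ℕ) :
    (numAqC q m k : ℤ) = (-1 : ℤ) ^ k * ∑ j ∈ Finset.range (m + 1),
      (-1 : ℤ) ^ j * (j.choose k) *
        (((m - (q - 1) * j).choose j * Nat.factorial (m - q * j) : ℕ) : ℤ) := by
  have h := moments q m k
  simp_rw [Nmom_formula hq] at h
  rw [h, ← mul_assoc, ← mul_pow]
  norm_num

end AqC

theorem stmt4 (q n k : ℕ) (hq : 1 ≤ q) (hn : 1 ≤ n) (hk : 1 ≤ k) :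
    (k * numAqC q (n + q - 1) k : ℤ) =
      (numAqC q n (k - 1) : ℤ) +
        if q ∣ n then (-1 : ℤ) ^ (k + n / q) * ((n / q).choose (k - 1)) else 0 := by
  classical
  obtain ⟨k', rfl⟩ : ∃ k', k = k' + 1 := ⟨k - 1, by omega⟩
  simp only [Nat.add_sub_cancel]
  set H : ℕ → ℤ := fun j => (-1 : ℤ) ^ j * (j.choose (k' + 1)) *
      (((n + q - 1 - (q - 1) * j).choose j * Nat.factorial (n + q - 1 - q * j) : ℕ) : ℤ)
    with hH
  set G : ℕ → ℤ := fun i => (-1 : ℤ) ^ i * (i.choose k') *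
      (((n - (q - 1) * i).choose i * Nat.factorial (n - q * i) : ℕ) : ℤ) with hG
  have hq4 : ∀ j : ℕ, (q - 1) * j + j = q * j := by
    intro j
    rcases Nat.exists_eq_add_of_le hq with ⟨p, hp⟩
    subst hp
    simp only [Nat.add_sub_cancel_left]
    ring
  have hHv : ∀ j, n + 1 ≤ j → H j = 0 := by
    intro j hj
    have h1 : q * (n + 1) ≤ q * j := Nat.mul_le_mul_left q hj
    have h2 : n ≤ q * n := Nat.le_mul_of_pos_left n (by omega)
    have h3 : q * (n + 1) = q * n + q := by ring
    have h4 := hq4 j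
    have hz : (n + q - 1 - (q - 1) * j).choose j = 0 :=
      Nat.choose_eq_zero_of_lt (by omega)
    simp [hH, hz]
  have hGv : ∀ i, n + 1 ≤ i → G i = 0 := by
    intro i hi
    have h2 := Nat.sub_le n ((q - 1) * i)
    have hz : (n - (q - 1) * i).choose i = 0 := Nat.choose_eq_zero_of_lt (by omega)
    simp [hG, hz]
  have h1 : (numAqC q (n + q - 1) (k' + 1) : ℤ)
      = (-1 : ℤ) ^ (k' + 1) * ∑ j ∈ Finset.range (n + q), H j := by
    have h := AqC.numAqC_eq hq (n + q - 1) (k' + 1)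
    rw [show n + q - 1 + 1 = n + q from by omega] at h
    exact h
  have h2 : (numAqC q n k' : ℤ) = (-1 : ℤ) ^ k' * ∑ i ∈ Finset.range (n + 1), G i :=
    AqC.numAqC_eq hq n k'
  have hext1 : ∑ j ∈ Finset.range (n + q), H j = ∑ j ∈ Finset.range (n + q + 1), H j := by
    apply Finset.sum_subset
    · intro x hx
      simp only [Finset.mem_range] at hx ⊢
      omega
    · intro x _ hx
      simp only [Finset.mem_range] at hx
      exact hHv x (by omega)
  have hext2 : ∑ i ∈ Finset.range (n + 1), G i = ∑ i ∈ Finset.range (n + q), G i := by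
    apply Finset.sum_subset
    · intro x hx
      simp only [Finset.mem_range] at hx ⊢
      omega
    · intro x hx1 hx2
      simp only [Finset.mem_range] at hx1 hx2
      exact hGv x (by omega)
  have hterm : ∀ i : ℕ, ((k' + 1 : ℕ) : ℤ) * H (i + 1)
      = -(G i) + (-1 : ℤ) ^ i * (if n = q * i then ((i.choose k') : ℤ) else 0) := by
    intro i
    have hPQ := hq4 i
    have e1 : n + q - 1 - (q - 1) * (i + 1) = n - (q - 1) * i := by
      have h : (q - 1) * (i + 1) = (q - 1) * i + (q - 1) := by ring
      omega
    have e2 : n + q - 1 - q * (i + 1) = n - 1 - q * i := by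
      have h : q * (i + 1) = q * i + q := by ring
      omega
    simp only [hH, hG]
    rw [e1, e2]
    set M := n - (q - 1) * i with hM
    rcases lt_trichotomy (q * i) n with h | h | h
    · rw [if_neg (by omega)]
      have hMi : i + 1 ≤ M := by omega
      have hnat : (k' + 1) * ((i + 1).choose (k' + 1))
            * (M.choose (i + 1) * Nat.factorial (n - 1 - q * i))
          = i.choose k' * (M.choose i * Nat.factorial (n - q * i)) := by
        have hA : (k' + 1) * ((i + 1).choose (k' + 1)) = (i + 1) * (i.choose k') := by
          have hs := Nat.add_one_mul_choose_eq i k'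
          rw [hs]
          exact Nat.mul_comm _ _
        have hB : (i + 1) * (M.choose (i + 1) * Nat.factorial (M - (i + 1)))
            = M.choose i * Nat.factorial (M - i) := by
          have f1 := Nat.choose_mul_factorial_mul_factorial hMi
          have f2 := Nat.choose_mul_factorial_mul_factorial
            (le_trans (Nat.le_succ i) hMi)
          apply Nat.eq_of_mul_eq_mul_right (Nat.factorial_pos i)
          calc (i + 1) * (M.choose (i + 1) * Nat.factorial (M - (i + 1))) * Nat.factorial i
              = M.choose (i + 1) * ((i + 1) * Nat.factorial i) * Nat.factorial (M - (i + 1)) := by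
                ring
            _ = M.choose (i + 1) * Nat.factorial (i + 1) * Nat.factorial (M - (i + 1)) := by
                rw [Nat.factorial_succ]
            _ = Nat.factorial M := f1
            _ = M.choose i * Nat.factorial i * Nat.factorial (M - i) := f2.symm
            _ = M.choose i * Nat.factorial (M - i) * Nat.factorial i := by ring
        have eMi : n - 1 - q * i = M - (i + 1) := by omega
        have eMi2 : n - q * i = M - i := by omega
        rw [eMi, eMi2]
        calc (k' + 1) * ((i + 1).choose (k' + 1))
              * (M.choose (i + 1) * Nat.factorial (M - (i + 1)))
            = (i + 1) * (i.choose k') * (M.choose (i + 1) * Nat.factorial (M - (i + 1))) := by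
              rw [hA]
          _ = i.choose k' * ((i + 1) * (M.choose (i + 1) * Nat.factorial (M - (i + 1)))) := by
              ring
          _ = i.choose k' * (M.choose i * Nat.factorial (M - i)) := by rw [hB]
      have hz : ((k' + 1 : ℕ) : ℤ) * (((i + 1).choose (k' + 1) : ℕ) : ℤ)
            * ((M.choose (i + 1) * Nat.factorial (n - 1 - q * i) : ℕ) : ℤ)
          = ((i.choose k' : ℕ) : ℤ) * ((M.choose i * Nat.factorial (n - q * i) : ℕ) : ℤ) := by
        exact_mod_cast hnat
      rw [pow_succ]
      push_cast at hz ⊢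
      linear_combination (-(-1 : ℤ) ^ i) * hz
    · rw [if_pos h.symm]
      have hMi : M = i := by omega
      rw [hMi]
      have c0 : i.choose (i + 1) = 0 := Nat.choose_eq_zero_of_lt (by omega)
      have c1 : i.choose i = 1 := Nat.choose_self i
      have e3 : n - q * i = 0 := by omega
      rw [c0, c1, e3]
      push_cast [Nat.factorial_zero]
      try ring
    · rw [if_neg (by omega)]
      have hi1 : 1 ≤ i := by
        rcases Nat.eq_zero_or_pos i with rfl | h1
        · simp at h
        · exact h1
      have c0 : M.choose (i + 1) = 0 := Nat.choose_eq_zero_of_lt (by omega)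
      have c1 : M.choose i = 0 := Nat.choose_eq_zero_of_lt (by omega)
      rw [c0, c1]
      push_cast
      ring
  have hdelta : ∑ i ∈ Finset.range (n + q),
        ((-1 : ℤ) ^ i * (if n = q * i then ((i.choose k') : ℤ) else 0))
      = if q ∣ n then (-1 : ℤ) ^ (n / q) * ((n / q).choose k') else 0 := by
    by_cases hdvd : q ∣ n
    · obtain ⟨t, rfl⟩ := hdvd
      have ht : q * t / q = t := Nat.mul_div_cancel_left t (by omega)
      rw [if_pos ⟨t, rfl⟩, ht]
      rw [Finset.sum_eq_single t]
      · rw [if_pos rfl]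
      · intro i _ hne
        rw [if_neg (fun hc => hne (Nat.eq_of_mul_eq_mul_left (by omega) hc.symm)), mul_zero]
      · intro habs
        exfalso
        apply habs
        have h2 : t ≤ q * t := Nat.le_mul_of_pos_left t (by omega)
        simp only [Finset.mem_range]
        omega
    · rw [if_neg hdvd]
      apply Finset.sum_eq_zero
      intro i _
      rw [if_neg (fun hc => hdvd ⟨i, hc⟩), mul_zero]
  have main : ((k' + 1 : ℕ) : ℤ) * (∑ j ∈ Finset.range (n + q), H j)
      = -(∑ i ∈ Finset.range (n + 1), G i)
        + (if q ∣ n then (-1 : ℤ) ^ (n / q) * ((n / q).choose k') else 0) := by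
    rw [hext1, Finset.sum_range_succ' H (n + q), mul_add]
    have hH0 : ((k' + 1 : ℕ) : ℤ) * H 0 = 0 := by
      have : Nat.choose 0 (k' + 1) = 0 := Nat.choose_eq_zero_of_lt (by omega)
      simp [hH, this]
    rw [hH0, add_zero, Finset.mul_sum]
    rw [Finset.sum_congr rfl (fun i _ => hterm i)]
    rw [Finset.sum_add_distrib, hdelta, hext2]
    congr 1
    rw [← Finset.sum_neg_distrib]
  rw [h1, h2]
  have hcomm : ((k' + 1 : ℕ) : ℤ) * ((-1 : ℤ) ^ (k' + 1) * ∑ j ∈ Finset.range (n + q), H j)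
      = (-1 : ℤ) ^ (k' + 1) * (((k' + 1 : ℕ) : ℤ) * ∑ j ∈ Finset.range (n + q), H j) := by
    ring
  rw [hcomm, main]
  by_cases hdvd : q ∣ n
  · rw [if_pos hdvd, if_pos hdvd]
    ring
  · rw [if_neg hdvd, if_neg hdvd]
    ring
end

section
/- The number b_n of permutations of {1,...,n} with no adjacent q-cycle equals the sum over j from 0 to floor(n/q) of (-1)^j * (n-(q-1)j)!/j!. -/
open Finset

/-- `b q n` = number of permutations of `{1,...,n}` with no adjacent `q`-cycle. -/
def b (q n : ℕ) : ℕ := numAqC q n 0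

def compatP (q : ℕ) (S : Finset ℕ) : Prop := ∀ a ∈ S, ∀ b ∈ S, a < b → a + q ≤ b

instance (q : ℕ) : DecidablePred (compatP q) := fun _ => by unfold compatP; infer_instance

lemma card_compat (q : ℕ) (hq : 1 ≤ q) (m j : ℕ) :
    (((Finset.range m).powersetCard j).filter (compatP q)).card
      = (m + (q-1) - (q-1)*j).choose j := by
  induction m using Nat.strong_induction_on generalizing j with
  | _ m IH =>
  match m, j with
  | 0, 0 => rw [Finset.range_zero, Finset.powersetCard_zero]
            rw [Finset.filter_singleton]
            simp [compatP]
  | 0, j+1 =>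
      have h0 : 0 + (q - 1) - (q-1)*(j+1) = 0 := by
        have : q - 1 ≤ (q-1)*(j+1) := Nat.le_mul_of_pos_right _ (by omega)
        omega
      rw [h0, Nat.choose_eq_zero_of_lt (Nat.succ_pos j), Finset.range_zero,
        Finset.powersetCard_eq_empty.mpr (by simp), Finset.filter_empty, Finset.card_empty]
  | m+1, 0 =>
      rw [Finset.powersetCard_zero, Finset.filter_singleton]
      simp [compatP]
  | m+1, j+1 =>
    rw [Finset.range_add_one, powersetCard_succ_insert (by simp)]
    rw [filter_union, card_union_of_disjoint]
    · have h1 : ((powersetCard (j+1) (range m)).filter (compatP q)).card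
          = (m + (q-1) - (q-1)*(j+1)).choose (j+1) := IH m (by omega) (j+1)
      have h2 : (((powersetCard j (range m)).image (insert m)).filter (compatP q)).card
          = (m+1-q + (q-1) - (q-1)*j).choose j := by
        rw [← IH (m+1-q) (by omega) j]
        apply Finset.card_nbij' (fun S => S.erase m) (fun S => insert m S)
        · intro S hS
          simp only [mem_coe, mem_filter, mem_image, mem_powersetCard] at hS ⊢
          obtain ⟨⟨T, ⟨hTsub, hTcard⟩, rfl⟩, hc⟩ := hS
          have hmT : m ∉ T := fun h => absurd (hTsub h) (by simp)
          rw [Finset.erase_insert hmT]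
          refine ⟨⟨fun a ha => ?_, hTcard⟩, fun a ha b hb hab => hc a (by simp [ha]) b (by simp [hb]) hab⟩
          have ham : a + q ≤ m := by
            have h3 : a < m := by have := hTsub ha; simpa using this
            have := hc a (by simp [ha]) m (by simp) h3
            omega
          simp only [mem_range]; omega
        · intro S hS
          simp only [mem_coe, mem_filter, mem_image, mem_powersetCard] at hS ⊢
          obtain ⟨⟨hsub, hcard⟩, hc⟩ := hS
          have hsub' : ∀ a ∈ S, a + q ≤ m := by
            intro a ha; have := hsub ha; simp only [mem_range] at this; omega
          refine ⟨⟨S, ⟨⟨fun a ha => ?_, hcard⟩, rfl⟩⟩, ?_⟩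
          · have := hsub' a ha; simp only [mem_range]; omega
          · intro a ha b hb hab
            rcases Finset.mem_insert.mp ha with rfl | ha'
            · rcases Finset.mem_insert.mp hb with rfl | hb'
              · omega
              · have := hsub' b hb'; omega
            · rcases Finset.mem_insert.mp hb with rfl | hb'
              · have := hsub' a ha'; omega
              · exact hc a ha' b hb' hab
        · intro S hS
          simp only [mem_coe, mem_filter, mem_image] at hS
          obtain ⟨⟨T, hT, rfl⟩, _⟩ := hS
          have hmT : m ∉ T := by
            simp only [mem_powersetCard] at hT
            exact fun h => absurd (hT.1 h) (by simp)
          exact congrArg (insert m) (Finset.erase_insert hmT)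
        · intro S hS
          simp only [mem_coe, mem_filter, mem_powersetCard] at hS
          have hmS : m ∉ S := fun h => by have := hS.1.1 h; simp only [mem_range] at this; omega
          exact Finset.erase_insert hmS
      rw [h1, h2]
      -- now pure arithmetic with choose
      have hj0 : j = 0 ∨ q - 1 ≤ (q-1)*j := by
        rcases Nat.eq_zero_or_pos j with h | h
        · exact Or.inl h
        · exact Or.inr (Nat.le_mul_of_pos_right _ h)
      rcases hj0 with rfl | hj0
      · simp only [zero_add, Nat.mul_one, Nat.mul_zero, Nat.choose_zero_right,
          Nat.choose_one_right]
        omega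
      rcases le_or_gt ((q-1)*(j+1)) (m + (q-1)) with hc | hc
      · have e1 : m+1 + (q-1) - (q-1)*(j+1) = (m + (q-1) - (q-1)*(j+1)) + 1 := by
          omega
        have e2 : m+1-q + (q-1) - (q-1)*j = m + (q-1) - (q-1)*(j+1) := by
          rw [Nat.mul_succ] at hc ⊢
          omega
        rw [e1, e2, Nat.choose_succ_succ]
        ring
      · have hj1 : 1 ≤ j := by
          by_contra h
          have hj' : j = 0 := by omega
          rw [hj', zero_add, Nat.mul_one] at hc
          omega
        have e1 : m+1 + (q-1) - (q-1)*(j+1) < j + 1 := by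
          rw [Nat.mul_succ] at hc ⊢
          omega
        have e2 : m + (q-1) - (q-1)*(j+1) = 0 := by omega
        have e3 : m+1-q + (q-1) - (q-1)*j < j := by
          rw [Nat.mul_succ] at hc
          omega
        rw [Nat.choose_eq_zero_of_lt e1, e2, Nat.choose_eq_zero_of_lt e3,
            Nat.choose_eq_zero_of_lt (by omega : 0 < j + 1)]
    · rw [Finset.disjoint_left]
      intro S hS1 hS2
      simp only [mem_filter, mem_powersetCard, mem_image] at hS1 hS2
      obtain ⟨⟨T, _, rfl⟩, _⟩ := hS2
      exact absurd (hS1.1.1 (Finset.mem_insert_self m T)) (by simp)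

def inT (q : ℕ) (S : Finset ℕ) {n : ℕ} (x : Fin n) : Prop :=
  ∃ a ∈ S, a ≤ x.val ∧ x.val < a + q

instance (q : ℕ) (S : Finset ℕ) (n : ℕ) : DecidablePred (inT q S (n := n)) := fun _ => by
  unfold inT; infer_instance

def gfun (q : ℕ) (S : Finset ℕ) (n : ℕ) (x : Fin n) : Fin n :=
  if _ : ∃ a ∈ S, x.val = a + q - 1 then ⟨x.val - (q-1), lt_of_le_of_lt (Nat.sub_le _ _) x.isLt⟩
  else if h2 : (∃ a ∈ S, a ≤ x.val ∧ x.val < a + q - 1) ∧ x.val + 1 < n then ⟨x.val + 1, h2.2⟩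
  else x

section main
variable {q n : ℕ} {S : Finset ℕ}

lemma huniq (hc : compatP q S) {a b x : ℕ} (ha : a ∈ S) (hb : b ∈ S)
    (h1 : a ≤ x) (h2 : x < a + q) (h3 : b ≤ x) (h4 : x < b + q) : a = b := by
  rcases lt_trichotomy a b with h | h | h
  · have := hc a ha b hb h; omega
  · exact h
  · have := hc b hb a ha h; omega

lemma heval (hq : 1 ≤ q) (hn : ∀ a ∈ S, a + q ≤ n) (hc : compatP q S)
    {a : ℕ} (ha : a ∈ S) (x : Fin n) (h1 : a ≤ x.val) (h2 : x.val < a + q) :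
    (gfun q S n x).val = if x.val = a + q - 1 then a else x.val + 1 := by
  by_cases hx : x.val = a + q - 1
  · rw [if_pos hx]
    unfold gfun
    rw [dif_pos ⟨a, ha, hx⟩]
    simp only [Fin.val_mk]
    omega
  · rw [if_neg hx]
    unfold gfun
    rw [dif_neg, dif_pos]
    · constructor
      · exact ⟨a, ha, h1, by omega⟩
      · have := hn a ha; omega
    · rintro ⟨c, hcS, hxc⟩
      have : a = c := huniq hc ha hcS h1 h2 (by omega) (by omega)
      omega

lemma gfun_inj (hq : 1 ≤ q) (hn : ∀ a ∈ S, a + q ≤ n) (hc : compatP q S) :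
    Function.Injective (gfun q S n) := by
  intro x y hxy
  unfold gfun at hxy
  split_ifs at hxy with h1 h2 h3 h4 h5 h6 h7 h8 <;>
    rw [Fin.ext_iff] at hxy ⊢ <;>
    (try simp only [Fin.val_mk] at hxy)
  -- E E
  · obtain ⟨a, haS, hxa⟩ := h1
    obtain ⟨c, hcS, hyc⟩ := h2
    omega
  -- E B
  · obtain ⟨a, haS, hxa⟩ := h1
    obtain ⟨⟨c, hcS, hyc1, hyc2⟩, _⟩ := h3
    have hca : c + q ≤ a := hc c hcS a haS (by omega)
    omega
  -- E id
  · obtain ⟨a, haS, hxa⟩ := h1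
    exfalso
    rcases Nat.lt_or_ge 1 q with hq2 | hq2
    · exact h3 ⟨⟨a, haS, by omega, by omega⟩, by have := hn a haS; omega⟩
    · exact h2 ⟨a, haS, by omega⟩
  -- B E
  · obtain ⟨⟨a, haS, hxa1, hxa2⟩, _⟩ := h4
    obtain ⟨c, hcS, hyc⟩ := h5
    have hac : a + q ≤ c := hc a haS c hcS (by omega)
    omega
  -- B B
  · omega
  -- B id
  · obtain ⟨⟨a, haS, hxa1, hxa2⟩, _⟩ := h4
    exfalso
    rcases Nat.lt_or_ge (x.val + 1) (a + q - 1) with hlt | hge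
    · exact h6 ⟨⟨a, haS, by omega, by omega⟩, by have := hn a haS; omega⟩
    · exact h5 ⟨a, haS, by omega⟩
  -- id E
  · obtain ⟨c, hcS, hyc⟩ := h7
    exfalso
    rcases Nat.lt_or_ge 1 q with hq2 | hq2
    · exact h4 ⟨⟨c, hcS, by omega, by omega⟩, by have := hn c hcS; omega⟩
    · exact h1 ⟨c, hcS, by omega⟩
  -- id B
  · obtain ⟨⟨c, hcS, hyc1, hyc2⟩, _⟩ := h8
    exfalso
    rcases Nat.lt_or_ge (x.val) (c + q - 1) with hlt | hge
    · exact h4 ⟨⟨c, hcS, by omega, by omega⟩, by have := hn c hcS; omega⟩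
    · exact h1 ⟨c, hcS, by omega⟩
  -- id id
  · exact hxy

end main

section main2
variable {q n : ℕ} {S : Finset ℕ}

lemma card_fixed_cycles (hq : 1 ≤ q) (hn : ∀ a ∈ S, a + q ≤ n) (hc : compatP q S) :
    (Finset.univ.filter (fun π : Equiv.Perm (Fin n) => ∀ a ∈ S, isAdjCycle q π a)).card
      = (n - q * S.card).factorial := by
  have hginj := gfun_inj (q := q) (n := n) (S := S) hq hn hc
  let π₀ : Equiv.Perm (Fin n) :=
    Equiv.ofBijective _ ((Fintype.bijective_iff_injective_and_card _).mpr ⟨hginj, rfl⟩)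
  have hπ₀ : ∀ x, π₀ x = gfun q S n x := fun x => rfl
  have hgT : ∀ x : Fin n, inT q S x → inT q S (π₀ x) := by
    rintro x ⟨a, haS, h1, h2⟩
    have hv : (π₀ x).val = if x.val = a + q - 1 then a else x.val + 1 := by
      rw [hπ₀]; exact heval hq hn hc haS x h1 h2
    by_cases hx : x.val = a + q - 1
    · rw [if_pos hx] at hv; exact ⟨a, haS, by omega, by omega⟩
    · rw [if_neg hx] at hv; exact ⟨a, haS, by omega, by omega⟩
  have hgid : ∀ x : Fin n, ¬ inT q S x → π₀ x = x := by
    intro x hx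
    rw [hπ₀]; unfold gfun
    rw [dif_neg, dif_neg]
    · rintro ⟨⟨a, haS, h1, h2⟩, _⟩; exact hx ⟨a, haS, h1, by omega⟩
    · rintro ⟨a, haS, h1⟩; exact hx ⟨a, haS, by omega, by omega⟩
  have hsymm : ∀ x : Fin n, inT q S x → inT q S (π₀.symm x) := by
    intro x hx
    by_contra hy
    have h := hgid _ hy
    rw [Equiv.apply_symm_apply] at h
    exact hy (h ▸ hx)
  have hA : ∀ π : Equiv.Perm (Fin n),
      (∀ a ∈ S, isAdjCycle q π a) ↔ ∀ x : Fin n, inT q S x → π x = π₀ x := by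
    intro π
    constructor
    · rintro h x ⟨a, haS, h1, h2⟩
      have e1 := (h a haS).2 x h1 h2
      have e2 := heval hq hn hc haS x h1 h2
      apply Fin.ext
      rw [e1, hπ₀]
      exact e2.symm
    · intro h a haS
      refine ⟨hn a haS, fun i h1 h2 => ?_⟩
      rw [h i ⟨a, haS, h1, h2⟩, hπ₀]
      exact heval hq hn hc haS i h1 h2
  have hcard1 : (Finset.univ.filter (fun π : Equiv.Perm (Fin n) => ∀ a ∈ S, isAdjCycle q π a)).card
      = (Finset.univ.filter (fun σ : Equiv.Perm (Fin n) => ∀ x : Fin n, inT q S x → σ x = x)).card := by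
    apply Finset.card_nbij' (fun π => π * π₀⁻¹) (fun σ => σ * π₀)
    · intro π hπ
      simp only [Finset.mem_coe, Finset.mem_filter, Finset.mem_univ, true_and] at hπ ⊢
      intro x hx
      have hy : inT q S (π₀⁻¹ x) := hsymm x hx
      calc (π * π₀⁻¹) x = π (π₀⁻¹ x) := rfl
        _ = π₀ (π₀⁻¹ x) := (hA π).mp hπ _ hy
        _ = x := by simp
    · intro σ hσ
      simp only [Finset.mem_coe, Finset.mem_filter, Finset.mem_univ, true_and] at hσ ⊢
      rw [hA]
      intro x hx
      calc (σ * π₀) x = σ (π₀ x) := rfl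
        _ = π₀ x := hσ _ (hgT x hx)
    · intro π _
      exact inv_mul_cancel_right π π₀
    · intro σ _
      exact mul_inv_cancel_right σ π₀
  have hTcard : Fintype.card {x : Fin n // inT q S x} = q * S.card := by
    rw [Fintype.card_subtype]
    have e : (Finset.univ.filter (fun x : Fin n => inT q S x)).card
        = (S.biUnion (fun a => Finset.Ico a (a+q))).card := by
      refine Finset.card_bij' (fun x _ => x.val) (fun y hy => ⟨y, ?_⟩) ?_ ?_ ?_ ?_
      · simp only [Finset.mem_biUnion, Finset.mem_Ico] at hy
        obtain ⟨a, haS, _, h2⟩ := hy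
        have := hn a haS; omega
      · intro x hx
        simp only [Finset.mem_filter, Finset.mem_univ, true_and] at hx
        obtain ⟨a, haS, h1, h2⟩ := hx
        simp only [Finset.mem_biUnion, Finset.mem_Ico]
        exact ⟨a, haS, h1, h2⟩
      · intro y hy
        simp only [Finset.mem_filter, Finset.mem_univ, true_and]
        simp only [Finset.mem_biUnion, Finset.mem_Ico] at hy
        obtain ⟨a, haS, h1, h2⟩ := hy
        exact ⟨a, haS, h1, h2⟩
      · intro x hx; rfl
      · intro y hy; rfl
    rw [e, Finset.card_biUnion]
    · rw [Finset.sum_congr rfl (fun a _ => Nat.card_Ico a (a+q))]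
      simp [Finset.sum_const, Nat.add_sub_cancel_left, mul_comm]
    · intro a haS b hbS hab
      rw [Function.onFun, Finset.disjoint_left]
      intro x hx1 hx2
      simp only [Finset.mem_Ico] at hx1 hx2
      exact hab (huniq hc haS hbS hx1.1 hx1.2 hx2.1 hx2.2)
  rw [hcard1]
  have h2 : (Finset.univ.filter (fun σ : Equiv.Perm (Fin n) => ∀ x : Fin n, inT q S x → σ x = x)).card
      = Fintype.card (Equiv.Perm {x : Fin n // ¬ inT q S x}) := by
    rw [← Fintype.card_subtype]
    apply Fintype.card_congr
    refine Equiv.trans (Equiv.subtypeEquivRight (fun σ => ?_))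
      (Equiv.Perm.subtypeEquivSubtypePerm (fun x : Fin n => ¬ inT q S x)).symm
    constructor
    · intro h x hx; exact h x (not_not.mp hx)
    · intro h x hx; exact h x (not_not.mpr hx)
  rw [h2, Fintype.card_perm, Fintype.card_subtype_compl, hTcard, Fintype.card_fin]

end main2

lemma cycle_conflict {q n : ℕ} (hq : 1 ≤ q) {π : Equiv.Perm (Fin n)} {a c : ℕ}
    (ha : isAdjCycle q π a) (hb : isAdjCycle q π c) (hac : a < c) (hlt : c < a + q) : False := by
  have h1 := ha.1
  have h2 := hb.1
  obtain ⟨i, hi⟩ : ∃ i : Fin n, i.val = a + q - 1 := ⟨⟨a + q - 1, by omega⟩, rfl⟩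
  have e1 := ha.2 i (by omega) (by omega)
  have e2 := hb.2 i (by omega) (by omega)
  rw [if_pos (by omega)] at e1
  rw [if_neg (by omega)] at e2
  omega

lemma sum_choose_eq_card {q n : ℕ} (hq : 1 ≤ q) (j : ℕ) :
    ∑ π : Equiv.Perm (Fin n), (adjCycleCount q π).choose j
      = (((Finset.range (n+1-q)).powersetCard j).filter (compatP q)).card
          * (n - q*j).factorial := by
  have step1 : ∀ π : Equiv.Perm (Fin n), (adjCycleCount q π).choose j
      = (((range n).powersetCard j).filter (fun S => ∀ a ∈ S, isAdjCycle q π a)).card := by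
    intro π
    rw [adjCycleCount, ← Finset.card_powersetCard]
    congr 1
    ext S
    simp only [mem_powersetCard, mem_filter]
    constructor
    · rintro ⟨hsub, hcard⟩
      refine ⟨⟨fun x hx => (mem_filter.mp (hsub hx)).1, hcard⟩,
        fun x hx => (mem_filter.mp (hsub hx)).2⟩
    · rintro ⟨⟨hsub, hcard⟩, hall⟩
      exact ⟨fun x hx => mem_filter.mpr ⟨hsub hx, hall x hx⟩, hcard⟩
  rw [Finset.sum_congr rfl (fun π _ => step1 π)]
  have step2 : ∑ π : Equiv.Perm (Fin n),
      (((range n).powersetCard j).filter (fun S => ∀ a ∈ S, isAdjCycle q π a)).card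
      = ∑ S ∈ (range n).powersetCard j,
          (Finset.univ.filter (fun π : Equiv.Perm (Fin n) => ∀ a ∈ S, isAdjCycle q π a)).card := by
    simp only [Finset.card_filter]
    rw [Finset.sum_comm]
  rw [step2]
  have step3 : ∀ S ∈ (range n).powersetCard j,
      (Finset.univ.filter (fun π : Equiv.Perm (Fin n) => ∀ a ∈ S, isAdjCycle q π a)).card
        = if (∀ a ∈ S, a + q ≤ n) ∧ compatP q S then (n - q*j).factorial else 0 := by
    intro S hS
    have hcardS : S.card = j := (Finset.mem_powersetCard.mp hS).2
    by_cases h : (∀ a ∈ S, a + q ≤ n) ∧ compatP q S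
    · rw [if_pos h, card_fixed_cycles hq h.1 h.2, hcardS]
    · rw [if_neg h]
      rw [Finset.card_eq_zero, Finset.filter_eq_empty_iff]
      intro π _
      intro hall
      apply h
      refine ⟨fun a ha => (hall a ha).1, ?_⟩
      intro a haS c hcS hac
      by_contra hlt
      exact cycle_conflict hq (hall a haS) (hall c hcS) hac (by omega)
  rw [Finset.sum_congr rfl step3, Finset.sum_ite, Finset.sum_const, Finset.sum_const]
  simp only [smul_eq_mul, mul_zero, add_zero]
  congr 2
  ext S
  simp only [mem_filter, mem_powersetCard, mem_range]
  constructor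
  · rintro ⟨⟨hsub, hcard⟩, hbd, hcpt⟩
    exact ⟨⟨fun a ha => mem_range.mpr (by have := hbd a ha; omega), hcard⟩, hcpt⟩
  · rintro ⟨⟨hsub, hcard⟩, hcpt⟩
    have hbd : ∀ a ∈ S, a + q ≤ n := by
      intro a ha; have := mem_range.mp (hsub ha); omega
    exact ⟨⟨fun a ha => mem_range.mpr (by have := hbd a ha; omega), hcard⟩, hbd, hcpt⟩

theorem stmt5 (q n : ℕ) (hq : 1 ≤ q) :
    (b q n : ℚ) =
      ∑ j ∈ Finset.range (n / q + 1), (-1 : ℚ) ^ j * ((n - (q - 1) * j).factorial : ℚ) / (j.factorial : ℚ) := by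
  have hcount_le : ∀ π : Equiv.Perm (Fin n), adjCycleCount q π ≤ n := fun π =>
    le_trans (Finset.card_filter_le _ _) (by simp)
  have key : ∀ c : ℕ, c ≤ n →
      (if c = 0 then (1:ℚ) else 0) = ∑ j ∈ Finset.range (n+1), (-1:ℚ)^j * (c.choose j : ℚ) := by
    intro c hc
    have h := Int.alternating_sum_range_choose (n := c)
    have h2 : ((if c = 0 then (1:ℤ) else 0 : ℤ) : ℚ)
        = ∑ m ∈ Finset.range (c+1), (-1:ℚ)^m * (c.choose m : ℚ) := by
      rw [← h]
      push_cast
      rfl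
    rw [apply_ite (fun z : ℤ => (z : ℚ))] at h2
    push_cast at h2
    rw [h2]
    apply Finset.sum_subset
    · exact Finset.range_subset_range.mpr (by omega)
    · intro x _ hx
      rw [Nat.choose_eq_zero_of_lt (by simp only [Finset.mem_range] at hx; omega)]
      simp
  have hb0 : (b q n : ℚ) = ∑ π : Equiv.Perm (Fin n), if adjCycleCount q π = 0 then (1:ℚ) else 0 := by
    rw [b, numAqC, Finset.card_filter]
    push_cast
    rfl
  rw [hb0]
  have hswap : (∑ π : Equiv.Perm (Fin n), if adjCycleCount q π = 0 then (1:ℚ) else 0)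
      = ∑ j ∈ Finset.range (n+1), (-1:ℚ)^j
          * ∑ π : Equiv.Perm (Fin n), ((adjCycleCount q π).choose j : ℚ) := by
    rw [Finset.sum_congr rfl (fun π _ => key _ (hcount_le π)), Finset.sum_comm]
    exact Finset.sum_congr rfl (fun j _ => by rw [Finset.mul_sum])
  rw [hswap]
  have hN : ∀ j, (∑ π : Equiv.Perm (Fin n), ((adjCycleCount q π).choose j : ℚ))
      = (((((Finset.range (n+1-q)).powersetCard j).filter (compatP q)).card
          * (n - q*j).factorial : ℕ) : ℚ) := by
    intro j
    rw [← sum_choose_eq_card (n := n) hq j]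
    push_cast
    rfl
  rw [Finset.sum_congr rfl (fun j _ => by rw [hN j])]
  have hsubset : Finset.range (n/q + 1) ⊆ Finset.range (n+1) :=
    Finset.range_subset_range.mpr (by have := Nat.div_le_self n q; omega)
  have hmulx : ∀ j : ℕ, (q - 1) * j + j = q * j := by
    intro j
    obtain ⟨p, rfl⟩ := Nat.exists_eq_add_of_le hq
    rw [Nat.add_sub_cancel_left, Nat.add_mul, one_mul]
    omega
  have hvanish : ∀ j ∈ Finset.range (n+1), j ∉ Finset.range (n/q + 1) →
      (-1:ℚ)^j * (((((Finset.range (n+1-q)).powersetCard j).filter (compatP q)).card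
          * (n - q*j).factorial : ℕ) : ℚ) = 0 := by
    intro j hj hj2
    have hjq : n < q * j := by
      simp only [Finset.mem_range] at hj hj2
      have hj' : n / q < j := by omega
      have h2 := (Nat.div_lt_iff_lt_mul (by omega : 0 < q)).mp hj'
      have h3 : j * q = q * j := Nat.mul_comm j q
      omega
    have hx := hmulx j
    have hj1 : 1 ≤ j := by
      by_contra hcon
      have hj0 : j = 0 := by omega
      exact hj2 (Finset.mem_range.mpr (by rw [hj0]; exact Nat.succ_pos _))
    have hA1 : q - 1 ≤ (q-1)*j := Nat.le_mul_of_pos_right _ hj1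
    obtain ⟨A, hA⟩ : ∃ A, (q-1)*j = A := ⟨_, rfl⟩
    obtain ⟨B, hB⟩ : ∃ B, q*j = B := ⟨_, rfl⟩
    rw [hA, hB] at hx
    rw [hB] at hjq
    rw [hA] at hA1
    have hzero : ((n+1-q) + (q-1) - A).choose j = 0 :=
      Nat.choose_eq_zero_of_lt (by omega)
    rw [card_compat q hq, hA, hzero]
    simp
  rw [← Finset.sum_subset hsubset hvanish]
  apply Finset.sum_congr rfl
  intro j hj
  have hjq : q * j ≤ n := by
    simp only [Finset.mem_range] at hj
    have hj' : j ≤ n / q := by omega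
    have h2 := (Nat.le_div_iff_mul_le (by omega : 0 < q)).mp hj'
    have h3 : j * q = q * j := Nat.mul_comm j q
    omega
  have hx := hmulx j
  rw [card_compat q hq]
  have htop : ((n+1-q) + (q-1) - (q-1)*j).choose j = (n - (q-1)*j).choose j := by
    rcases Nat.eq_zero_or_pos j with rfl | hj1
    · simp
    · have hqn : q ≤ n := by
        have := Nat.le_mul_of_pos_right q hj1
        omega
      congr 1
      omega
  rw [htop]
  have hj_le : j ≤ n - (q-1)*j := by omega
  have hfact := Nat.choose_mul_factorial_mul_factorial hj_le
  have hsub : n - (q-1)*j - j = n - q*j := by omega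
  rw [hsub] at hfact
  rw [mul_div_assoc]
  congr 1
  rw [eq_div_iff (by exact_mod_cast j.factorial_ne_zero : (j.factorial : ℚ) ≠ 0)]
  push_cast
  rw [← hfact]
  push_cast
  ring
end

section
/- For n ≥ q with q dividing n, b_n - n*b_{n-1} = (q-1)*b_{n-q} + q*(-1)^{n/q}; for n ≥ q with q not dividing n, b_n - n*b_{n-1} = (q-1)*b_{n-q}. -/
open Finset

lemma mulfact {q j : ℕ} (hq : 1 ≤ q) : j * q = j * (q - 1) + j := by
  cases q with
  | zero => omega
  | succ p => simp [Nat.mul_succ]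

lemma hzero {q : ℕ} (hq : 1 ≤ q) {m j : ℕ} (hj : 1 ≤ j) (h : m < j * q) :
    (m - j * (q - 1)).choose j = 0 := by
  apply Nat.choose_eq_zero_of_lt
  have := mulfact (j := j) hq
  omega

lemma pascal_trunc {q n j : ℕ} (hq : 1 ≤ q) (hn : q ≤ n) (hj : 1 ≤ j) :
    (n - j * (q - 1)).choose j
      = ((n - 1) - j * (q - 1)).choose j + ((n - q) - (j - 1) * (q - 1)).choose (j - 1) := by
  have hm : (j - 1) * (q - 1) + q = j * (q - 1) + 1 := by
    cases j with
    | zero => omega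
    | succ p =>
      cases q with
      | zero => omega
      | succ r => simp [Nat.succ_mul]; omega
  have h2 : (n - q) - (j - 1) * (q - 1) = (n - 1) - j * (q - 1) := by omega
  rw [h2]
  rcases Nat.lt_or_ge (j * (q - 1)) n with h | h
  · have h3 : n - j * (q - 1) = ((n - 1) - j * (q - 1)) + 1 := by omega
    obtain ⟨p, rfl⟩ : ∃ p, j = p + 1 := ⟨j - 1, by omega⟩
    rw [h3, Nat.choose_succ_succ]
    simp [Nat.add_comm]
  · have hn0 : n - j * (q - 1) = 0 := by omega
    have hn1 : (n - 1) - j * (q - 1) = 0 := by omega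
    have hj2 : 2 ≤ j := by
      rcases Nat.lt_or_ge j 2 with h' | h'
      · interval_cases j <;> omega
      · exact h'
    rw [hn0, hn1, Nat.choose_eq_zero_of_lt (by omega : 0 < j - 1)]; omega


noncomputable def g (q m j : ℕ) : ℤ :=
  (-1) ^ j * ((m - j * (q - 1)).choose j : ℤ) * ((m - j * q).factorial : ℤ)


lemma key {q n : ℕ} (hq : 1 ≤ q) (hn : q ≤ n) (j : ℕ) :
    g q n j - n * g q (n - 1) j - ((q : ℤ) - 1) * (if 1 ≤ j then g q (n - q) (j - 1) else 0)
      = if j * q = n then (q : ℤ) * (-1) ^ j else 0 := by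
  rcases Nat.eq_zero_or_pos j with rfl | hj
  · simp only [if_neg (by omega : ¬ (1 : ℕ) ≤ 0), if_neg (by omega : ¬ 0 * q = n)]
    simp only [g]
    have h1 : n - 0 * q = n := by omega
    have h2 : (n - 1) - 0 * q = n - 1 := by omega
    obtain ⟨m, rfl⟩ : ∃ m, n = m + 1 := ⟨n - 1, by omega⟩
    simp [Nat.factorial_succ]
  rw [if_pos (show 1 ≤ j from hj)]
  have hmf := mulfact (q := q) (j := j) hq
  have hmf' := mulfact (q := q) (j := j - 1) hq
  have hjq : (j - 1) * q + q = j * q := by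
    cases j with | zero => omega | succ p => simp [Nat.succ_mul]
  rcases lt_trichotomy (j * q) n with hlt | heq | hgt
  · -- main case
    obtain ⟨j', rfl⟩ : ∃ j', j = j' + 1 := ⟨j - 1, by omega⟩
    simp only [Nat.add_sub_cancel] at hmf' hjq ⊢
    obtain ⟨k', hk⟩ : ∃ k', n - (j' + 1) * q = k' + 1 := ⟨n - (j' + 1) * q - 1, by omega⟩
    simp only [g, Nat.add_sub_cancel]
    have e1 : n - (j' + 1) * (q - 1) = k' + j' + 2 := by omega
    have e2 : (n - 1) - (j' + 1) * (q - 1) = k' + j' + 1 := by omega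
    have e3 : (n - 1) - (j' + 1) * q = k' := by omega
    have e4 : (n - q) - j' * (q - 1) = k' + j' + 1 := by omega
    have e5 : (n - q) - j' * q = k' + 1 := by omega
    rw [hk, e1, e2, e3, e4, e5, if_neg (by omega : ¬ (j' + 1) * q = n)]
    have hpas : (k' + j' + 2).choose (j' + 1)
        = (k' + j' + 1).choose j' + (k' + j' + 1).choose (j' + 1) := by
      have := Nat.choose_succ_succ (k' + j' + 1) j'
      simpa using this
    have hstep : (k' + j' + 1).choose (j' + 1) * (j' + 1)
        = (k' + j' + 1).choose j' * (k' + 1) := by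
      have h := Nat.choose_succ_right_eq (k' + j' + 1) j'
      rwa [show k' + j' + 1 - j' = k' + 1 from by omega] at h
    have hnn : (n : ℤ) = (k' + 1) + (j' + 1) * q := by
      have : n = k' + 1 + (j' + 1) * q := by omega
      exact_mod_cast this
    rw [hpas, hnn, Nat.factorial_succ]
    push_cast
    have hstep' : ((k' + j' + 1).choose (j' + 1) : ℤ) * (j' + 1)
        = ((k' + j' + 1).choose j' : ℤ) * (k' + 1) := by exact_mod_cast hstep
    linear_combination ((-1 : ℤ) ^ j' * q * (Nat.factorial k' : ℤ)) * hstep'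
  · -- j * q = n
    simp only [g]
    have e1 : n - j * (q - 1) = j := by omega
    have e2 : n - j * q = 0 := by omega
    have e3 : (n - 1) - j * (q - 1) = j - 1 := by omega
    have e4 : (n - q) - (j - 1) * (q - 1) = j - 1 := by omega
    have e5 : (n - q) - (j - 1) * q = 0 := by omega
    rw [e1, e2, e3, e4, e5, if_pos heq, Nat.choose_self,
      Nat.choose_eq_zero_of_lt (by omega : j - 1 < j), Nat.choose_self]
    obtain ⟨j', rfl⟩ : ∃ j', j = j' + 1 := ⟨j - 1, by omega⟩
    simp [Nat.factorial_zero]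
    push_cast
    ring
  · -- j * q > n
    have hj2 : 2 ≤ j := by
      rcases Nat.lt_or_ge j 2 with h' | h'
      · interval_cases j <;> omega
      · exact h'
    simp only [g]
    rw [hzero hq hj (by omega), hzero hq hj (by omega : n - 1 < j * q),
      hzero hq (by omega : 1 ≤ j - 1) (by omega : n - q < (j - 1) * q),
      if_neg (by omega : ¬ j * q = n)]
    push_cast
    ring

lemma Brec {q n : ℕ} (hq : 1 ≤ q) (hn : q ≤ n) :
    (∑ j ∈ range (n + 1), g q n j) - (n : ℤ) * ∑ j ∈ range n, g q (n - 1) j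
      - ((q : ℤ) - 1) * ∑ j ∈ range (n - q + 1), g q (n - q) j
      = if q ∣ n then (q : ℤ) * (-1) ^ (n / q) else 0 := by
  have hn1 : 1 ≤ n := le_trans hq hn
  -- extend middle sum
  have hmid : ∑ j ∈ range n, g q (n - 1) j = ∑ j ∈ range (n + 1), g q (n - 1) j := by
    rw [Finset.sum_range_succ, show g q (n - 1) n = 0 from ?_, add_zero]
    have : ((n - 1) - n * (q - 1)).choose n = 0 :=
      hzero hq hn1 (by have := Nat.le_mul_of_pos_right n (show 0 < q from hq); omega)
    simp [g, this]
  -- extend third sum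
  have hthird : ∑ j ∈ range (n - q + 1), g q (n - q) j = ∑ j ∈ range n, g q (n - q) j := by
    apply Finset.sum_subset
    · intro x hx; simp at hx ⊢; omega
    · intro x hx hx2
      simp at hx hx2
      have h1 : 1 ≤ x := by omega
      have : ((n - q) - x * (q - 1)).choose x = 0 := by
        apply hzero hq h1
        have : x ≤ x * q := Nat.le_mul_of_pos_right x (show 0 < q from hq)
        omega
      simp [g, this]
  -- turn third sum into a shifted sum over range (n+1)
  have hshift : ∑ j ∈ range n, g q (n - q) j
      = ∑ j ∈ range (n + 1), (if 1 ≤ j then g q (n - q) (j - 1) else 0) := by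
    rw [Finset.sum_range_succ' (fun j => if 1 ≤ j then g q (n - q) (j - 1) else 0) n]
    simp
  rw [hmid, hthird, hshift, Finset.mul_sum, Finset.mul_sum, ← Finset.sum_sub_distrib,
    ← Finset.sum_sub_distrib]
  have := fun j => key (q := q) (n := n) hq hn j
  rw [Finset.sum_congr rfl (fun j _ => this j)]
  by_cases hd : q ∣ n
  · obtain ⟨c, rfl⟩ := hd
    have hc : ∀ j, (j * q = q * c) ↔ j = c := by
      intro j
      constructor
      · intro h; by_contra h2
        rcases Nat.lt_or_ge j c with h3 | h3
        · nlinarith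
        · have : c < j := by omega
          nlinarith
      · intro h; subst h; ring
    have hcongr : (∑ j ∈ range (q * c + 1), if j * q = q * c then (q : ℤ) * (-1) ^ j else 0)
        = ∑ j ∈ range (q * c + 1), if j = c then (q : ℤ) * (-1) ^ j else 0 :=
      Finset.sum_congr rfl (fun j _ => by simp only [hc j])
    rw [hcongr, Finset.sum_ite_eq' (range (q * c + 1)) c (fun j => (q : ℤ) * (-1) ^ j)]
    have hcm : c ∈ range (q * c + 1) := by
      simp
      nlinarith
    rw [if_pos hcm, if_pos ⟨c, rfl⟩, Nat.mul_div_cancel_left c (show 0 < q from hq)]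
  · rw [if_neg hd]
    apply Finset.sum_eq_zero
    intro j hj
    rw [if_neg]
    intro h
    exact hd ⟨j, by rw [← h, Nat.mul_comm]⟩

def compS (q n : ℕ) : Finset (Finset ℕ) :=
  (Finset.range n).powerset.filter fun S =>
    (∀ a ∈ S, a + q ≤ n) ∧ ∀ a ∈ S, ∀ b ∈ S, a < b → a + q ≤ b

lemma mem_compS {q n : ℕ} {S : Finset ℕ} : S ∈ compS q n ↔
    S ⊆ range n ∧ (∀ a ∈ S, a + q ≤ n) ∧ ∀ a ∈ S, ∀ b ∈ S, a < b → a + q ≤ b := by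
  simp [compS, and_assoc]

lemma compS_small {q n : ℕ} (hq : 1 ≤ q) (h : n < q) : compS q n = {∅} := by
  ext S
  simp only [mem_compS, Finset.mem_singleton]
  constructor
  · rintro ⟨h1, h2, h3⟩
    by_contra hne
    obtain ⟨a, ha⟩ := Finset.nonempty_of_ne_empty hne
    have := h2 a ha
    omega
  · rintro rfl
    refine ⟨by simp, by simp, by simp⟩

lemma compS_split {q n : ℕ} (hq : 1 ≤ q) (hn : q ≤ n) :
    compS q n = compS q (n - 1) ∪ (compS q (n - q)).image (insert (n - q)) := by
  ext S
  simp only [Finset.mem_union, Finset.mem_image, mem_compS]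
  constructor
  · rintro ⟨h1, h2, h3⟩
    by_cases hm : n - q ∈ S
    · right
      refine ⟨S.erase (n - q), ⟨?_, ?_, ?_⟩, Finset.insert_erase hm⟩
      · intro a ha
        have ha' := Finset.mem_of_mem_erase ha
        have hane := Finset.ne_of_mem_erase ha
        have h2a := h2 a ha'
        have : a < n - q := by
          rcases Nat.lt_or_ge a (n - q) with h' | h'
          · exact h'
          · have : n - q < a := by omega
            have := h3 (n - q) hm a ha' this
            omega
        have := h3 a ha' (n - q) hm this
        simp only [Finset.mem_range]
        omega
      · intro a ha
        have ha' := Finset.mem_of_mem_erase ha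
        have hane := Finset.ne_of_mem_erase ha
        have h2a := h2 a ha'
        have : a < n - q := by
          rcases Nat.lt_or_ge a (n - q) with h' | h'
          · exact h'
          · have : n - q < a := by omega
            have := h3 (n - q) hm a ha' this
            omega
        exact h3 a ha' (n - q) hm this
      · intro a ha b hb hab
        exact h3 a (Finset.mem_of_mem_erase ha) b (Finset.mem_of_mem_erase hb) hab
    · left
      refine ⟨?_, ?_, h3⟩
      · intro a ha
        have := h2 a ha
        have : a ≠ n - q := fun h => hm (h ▸ ha)
        simp only [Finset.mem_range]
        omega
      · intro a ha
        have := h2 a ha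
        have : a ≠ n - q := fun h => hm (h ▸ ha)
        omega
  · rintro (⟨h1, h2, h3⟩ | ⟨T, ⟨h1, h2, h3⟩, rfl⟩)
    · refine ⟨fun a ha => ?_, fun a ha => by have := h2 a ha; omega, h3⟩
      have := h1 ha
      simp only [Finset.mem_range] at this ⊢
      omega
    · have hT : ∀ a ∈ T, a < n - q := by
        intro a ha
        have := h1 ha
        simp only [Finset.mem_range] at this
        exact this
      refine ⟨?_, ?_, ?_⟩
      · intro a ha
        rcases Finset.mem_insert.mp ha with rfl | ha'
        · simp only [Finset.mem_range]; omega
        · have := hT a ha'; simp only [Finset.mem_range]; omega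
      · intro a ha
        rcases Finset.mem_insert.mp ha with rfl | ha'
        · omega
        · have := h2 a ha'; omega
      · intro a ha b hb hab
        rcases Finset.mem_insert.mp ha with rfl | ha'
        · rcases Finset.mem_insert.mp hb with rfl | hb'
          · omega
          · have := hT b hb'; omega
        · rcases Finset.mem_insert.mp hb with rfl | hb'
          · have := h2 a ha'; omega
          · exact h3 a ha' b hb' hab

lemma compS_not_mem {q n : ℕ} {S : Finset ℕ} (hS : S ∈ compS q n) : n - q ∉ S ∨ q ≤ n := by
  by_cases h : q ≤ n
  · right; exact h
  · left; intro hm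
    have := (mem_compS.mp hS).2.1 _ hm
    omega

lemma compS_mem_lt {q n : ℕ} (hq : 1 ≤ q) {S : Finset ℕ} (hS : S ∈ compS q n) :
    ∀ a ∈ S, a + q ≤ n := (mem_compS.mp hS).2.1

lemma comp_sum {q : ℕ} (hq : 1 ≤ q) :
    ∀ n : ℕ, ∀ F : ℕ → ℤ,
      (∑ S ∈ compS q n, F S.card)
        = ∑ j ∈ range (n + 1), ((n - j * (q - 1)).choose j : ℤ) * F j := by
  intro n
  induction n using Nat.strong_induction_on with
  | _ n ih =>
    intro F
    rcases Nat.lt_or_ge n q with hlt | hge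
    · rw [compS_small hq hlt]
      rw [Finset.sum_singleton, Finset.sum_range_succ']
      have hz : ∀ j ∈ range n, ((n - (j + 1) * (q - 1)).choose (j + 1) : ℤ) * F (j + 1) = 0 := by
        intro j hj
        have : (n - (j + 1) * (q - 1)).choose (j + 1) = 0 := by
          apply hzero hq (by omega)
          calc n < q := hlt
          _ ≤ (j + 1) * q := Nat.le_mul_of_pos_left q (by omega)
        rw [this]; push_cast; ring
      rw [Finset.sum_congr rfl hz]
      simp
    · -- inductive step
      have h1n : 1 ≤ n := le_trans hq hge
      have hdisj : Disjoint (compS q (n - 1)) ((compS q (n - q)).image (insert (n - q))) := by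
        rw [Finset.disjoint_left]
        intro S hS hS'
        obtain ⟨T, hT, rfl⟩ := Finset.mem_image.mp hS'
        have hmem : n - q ∈ insert (n - q) T := Finset.mem_insert_self _ _
        have := (mem_compS.mp hS).2.1 _ hmem
        omega
      have hnotmem : ∀ T ∈ compS q (n - q), n - q ∉ T := by
        intro T hT hm
        have := (mem_compS.mp hT).1 hm
        simp only [Finset.mem_range] at this
        omega
      rw [compS_split hq hge, Finset.sum_union hdisj, Finset.sum_image ?inj]
      case inj =>
        intro S hS T hT h
        have hS' := hnotmem S hS
        have hT' := hnotmem T hT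
        have := congrArg (fun U => Finset.erase U (n - q)) h
        simpa [Finset.erase_insert hS', Finset.erase_insert hT'] using this
      have hcard : ∀ T ∈ compS q (n - q), (insert (n - q) T).card = T.card + 1 := by
        intro T hT
        rw [Finset.card_insert_of_notMem (hnotmem T hT)]
      have himg : ∑ x ∈ compS q (n - q), F (insert (n - q) x).card
          = ∑ x ∈ compS q (n - q), F (x.card + 1) :=
        Finset.sum_congr rfl (fun T hT => by rw [hcard T hT])
      rw [himg, ih (n - 1) (by omega) F, ih (n - q) (by omega) (fun j => F (j + 1))]
      -- now pure binomial sum manipulation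
      have hext1 : ∑ j ∈ range (n - 1 + 1), (((n - 1) - j * (q - 1)).choose j : ℤ) * F j
          = ∑ j ∈ range (n + 1), (((n - 1) - j * (q - 1)).choose j : ℤ) * F j := by
        apply Finset.sum_subset
        · intro x hx; simp at hx ⊢; omega
        · intro x hx hx2
          simp only [Finset.mem_range] at hx hx2
          have hxq : x ≤ x * q := Nat.le_mul_of_pos_right x (show 0 < q from hq)
          have : ((n - 1) - x * (q - 1)).choose x = 0 := hzero hq (by omega) (by omega)
          rw [this]; push_cast; ring
      have hext2 : ∑ j ∈ range (n - q + 1), (((n - q) - j * (q - 1)).choose j : ℤ) * F (j + 1)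
          = ∑ j ∈ range n, (((n - q) - j * (q - 1)).choose j : ℤ) * F (j + 1) := by
        apply Finset.sum_subset
        · intro x hx; simp at hx ⊢; omega
        · intro x hx hx2
          simp only [Finset.mem_range] at hx hx2
          have h1 : 1 ≤ x := by omega
          have : ((n - q) - x * (q - 1)).choose x = 0 := by
            apply hzero hq h1
            have : x ≤ x * q := Nat.le_mul_of_pos_right x (show 0 < q from hq)
            omega
          rw [this]; push_cast; ring
      have hshift : ∑ j ∈ range (n - q + 1), (((n - q) - j * (q - 1)).choose j : ℤ) * F (j + 1)
          = ∑ j ∈ range (n + 1), (if 1 ≤ j then (((n - q) - (j - 1) * (q - 1)).choose (j - 1) : ℤ) * F j else 0) := by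
        symm
        rw [Finset.sum_range_succ' (fun j => if 1 ≤ j then (((n - q) - (j - 1) * (q - 1)).choose (j - 1) : ℤ) * F j else 0) n]
        have hcg : ∀ x ∈ range n,
            (if 1 ≤ x + 1 then (((n - q) - (x + 1 - 1) * (q - 1)).choose (x + 1 - 1) : ℤ) * F (x + 1) else 0)
              = (((n - q) - x * (q - 1)).choose x : ℤ) * F (x + 1) := by
          intro x _
          rw [if_pos (by omega), Nat.add_sub_cancel]
        rw [Finset.sum_congr rfl hcg, if_neg (by omega : ¬ (1:ℕ) ≤ 0), add_zero]
        exact hext2.symm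
      rw [hext1, hshift, ← Finset.sum_add_distrib]
      apply Finset.sum_congr rfl
      intro j hj
      rcases Nat.eq_zero_or_pos j with rfl | hjpos
      · simp
      · rw [if_pos (show 1 ≤ j from hjpos), pascal_trunc hq hge hjpos]
        push_cast
        ring

def inU (q : ℕ) (S : Finset ℕ) (j : ℕ) : Prop := ∃ a ∈ S, a ≤ j ∧ j < a + q

instance (q : ℕ) (S : Finset ℕ) (j : ℕ) : Decidable (inU q S j) := by
  unfold inU; infer_instance

def sig (q n : ℕ) (S : Finset ℕ) (i : Fin n) : Fin n :=
  if h1 : q - 1 ≤ i.val ∧ i.val - (q - 1) ∈ S then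
    ⟨i.val - (q - 1), lt_of_le_of_lt (Nat.sub_le _ _) i.isLt⟩
  else if h2 : inU q S i.val ∧ i.val + 1 < n then ⟨i.val + 1, h2.2⟩
  else i

lemma sig_spec1 {q n : ℕ} {S : Finset ℕ} {i : Fin n}
    (h1 : q - 1 ≤ i.val ∧ i.val - (q - 1) ∈ S) :
    (sig q n S i).val = i.val - (q - 1) := by
  rw [sig, dif_pos h1]

lemma sig_spec2 {q n : ℕ} {S : Finset ℕ} {i : Fin n}
    (h1 : ¬(q - 1 ≤ i.val ∧ i.val - (q - 1) ∈ S)) (h2 : inU q S i.val ∧ i.val + 1 < n) :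
    (sig q n S i).val = i.val + 1 := by
  rw [sig, dif_neg h1, dif_pos h2]

lemma sig_spec3 {q n : ℕ} {S : Finset ℕ} {i : Fin n}
    (h1 : ¬(q - 1 ≤ i.val ∧ i.val - (q - 1) ∈ S)) (h2 : ¬(inU q S i.val ∧ i.val + 1 < n)) :
    sig q n S i = i := by
  rw [sig, dif_neg h1, dif_neg h2]

section compat

variable {q n : ℕ} {S : Finset ℕ}

-- compatibility hypotheses
variable (hq : 1 ≤ q) (hbd : ∀ a ∈ S, a + q ≤ n)
  (hsep : ∀ a ∈ S, ∀ b ∈ S, a < b → a + q ≤ b)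

include hsep in
lemma interval_disj : ∀ a ∈ S, ∀ b ∈ S, ∀ j : ℕ, a ≤ j → j < a + q → b ≤ j → j < b + q → a = b := by
  intro a ha b hb j h1 h2 h3 h4
  rcases lt_trichotomy a b with h | h | h
  · have := hsep a ha b hb h; omega
  · exact h
  · have := hsep b hb a ha h; omega

include hq hbd in
lemma P1_not_and_inU {i : Fin n} (h1 : ¬(q - 1 ≤ i.val ∧ i.val - (q - 1) ∈ S))
    (h2 : inU q S i.val) : i.val + 1 < n := by
  obtain ⟨a, ha, ha1, ha2⟩ := h2
  have hbda := hbd a ha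
  have : i.val ≠ a + q - 1 := by
    intro h
    exact h1 ⟨by omega, by rw [show i.val - (q - 1) = a from by omega]; exact ha⟩
  omega

include hq in
lemma mem_inU {a : ℕ} (ha : a ∈ S) : inU q S a := ⟨a, ha, le_refl _, by omega⟩

include hq hbd hsep in
lemma sig_recover : ∀ j : Fin n,
    (if (sig q n S j).val ∈ S then (sig q n S j).val + (q - 1)
     else if inU q S (sig q n S j).val then (sig q n S j).val - 1
     else (sig q n S j).val) = j.val := by
  intro j
  by_cases h1 : q - 1 ≤ j.val ∧ j.val - (q - 1) ∈ S
  · rw [sig_spec1 h1, if_pos h1.2]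
    omega
  · by_cases h2 : inU q S j.val
    · have hlt := P1_not_and_inU hq hbd h1 h2
      rw [sig_spec2 h1 ⟨h2, hlt⟩]
      obtain ⟨a, ha, ha1, ha2⟩ := h2
      have hja : j.val ≠ a + q - 1 := by
        intro h
        exact h1 ⟨by omega, by rw [show j.val - (q - 1) = a from by omega]; exact ha⟩
      have hnotS : j.val + 1 ∉ S := by
        intro hmem
        have : a = j.val + 1 := interval_disj hsep a ha (j.val + 1) hmem (j.val + 1)
          (by omega) (by omega) (le_refl _) (by omega)
        omega
      rw [if_neg hnotS, if_pos ⟨a, ha, by omega, by omega⟩]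
      omega
    · rw [sig_spec3 h1 (fun h => h2 h.1)]
      have hnotS : j.val ∉ S := fun h => h2 (mem_inU hq h)
      rw [if_neg hnotS, if_neg h2]

include hq hbd hsep in
lemma sig_inj : Function.Injective (sig q n S) := by
  intro i i' heq
  have h1 := sig_recover hq hbd hsep i
  have h2 := sig_recover hq hbd hsep i'
  rw [heq] at h1
  apply Fin.ext
  rw [← h1, ← h2]

include hq hbd hsep in
lemma sig_val_in {i : Fin n} {a : ℕ} (ha : a ∈ S) (ha1 : a ≤ i.val) (ha2 : i.val < a + q) :
    (sig q n S i).val = if i.val = a + q - 1 then a else i.val + 1 := by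
  by_cases hc : i.val = a + q - 1
  · rw [if_pos hc]
    have h1 : q - 1 ≤ i.val ∧ i.val - (q - 1) ∈ S :=
      ⟨by omega, by rw [show i.val - (q - 1) = a from by omega]; exact ha⟩
    rw [sig_spec1 h1]
    omega
  · rw [if_neg hc]
    have h1 : ¬(q - 1 ≤ i.val ∧ i.val - (q - 1) ∈ S) := by
      rintro ⟨hx, hy⟩
      have := interval_disj hsep a ha (i.val - (q - 1)) hy i.val ha1 ha2 (by omega) (by omega)
      omega
    have hin : inU q S i.val := ⟨a, ha, ha1, ha2⟩
    rw [sig_spec2 h1 ⟨hin, P1_not_and_inU hq hbd h1 hin⟩]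

noncomputable def sigPerm (hq : 1 ≤ q) (hbd : ∀ a ∈ S, a + q ≤ n)
    (hsep : ∀ a ∈ S, ∀ b ∈ S, a < b → a + q ≤ b) : Equiv.Perm (Fin n) :=
  Equiv.ofBijective _ (Finite.injective_iff_bijective.mp (sig_inj hq hbd hsep))

lemma sigPerm_apply (i : Fin n) : sigPerm hq hbd hsep i = sig q n S i := rfl

include hq hbd hsep in
lemma agree_iff (π : Equiv.Perm (Fin n)) :
    (∀ a ∈ S, isAdjCycle q π a) ↔ ∀ i : Fin n, inU q S i.val → π i = sig q n S i := by
  constructor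
  · rintro h i ⟨a, ha, ha1, ha2⟩
    apply Fin.ext
    rw [(h a ha).2 i ha1 ha2, sig_val_in hq hbd hsep ha ha1 ha2]
  · intro h a ha
    refine ⟨hbd a ha, fun i ha1 ha2 => ?_⟩
    rw [h i ⟨a, ha, ha1, ha2⟩, sig_val_in hq hbd hsep ha ha1 ha2]

include hq hbd hsep in
lemma card_inU_aux : (Finset.univ.filter fun i : Fin n => inU q S i.val).card = q * S.card := by
  have h1 : (Finset.univ.filter fun i : Fin n => inU q S i.val).card
      = ((range n).filter (inU q S)).card := by
    apply Finset.card_bij (fun i _ => i.val)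
    · intro i hi
      simp only [Finset.mem_filter, Finset.mem_range] at hi ⊢
      exact ⟨i.isLt, hi.2⟩
    · intro i _ i' _ h
      exact Fin.ext h
    · intro j hj
      simp only [Finset.mem_filter, Finset.mem_range] at hj
      exact ⟨⟨j, hj.1⟩, by simp [Finset.mem_filter, hj.2], rfl⟩
  have h2 : (range n).filter (inU q S) = S.biUnion (fun a => Finset.Ico a (a + q)) := by
    ext j
    simp only [Finset.mem_filter, Finset.mem_range, Finset.mem_biUnion, Finset.mem_Ico, inU]
    constructor
    · rintro ⟨_, a, ha, h3, h4⟩; exact ⟨a, ha, h3, h4⟩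
    · rintro ⟨a, ha, h3, h4⟩
      exact ⟨by have := hbd a ha; omega, a, ha, h3, h4⟩
  have h3 : (S.biUnion (fun a => Finset.Ico a (a + q))).card = ∑ a ∈ S, (Finset.Ico a (a + q)).card := by
    apply Finset.card_biUnion
    intro a ha b hb hne
    rw [Function.onFun, Finset.disjoint_left]
    intro j hj hj'
    simp only [Finset.mem_Ico] at hj hj'
    exact hne (interval_disj hsep a ha b hb j hj.1 hj.2 hj'.1 hj'.2)
  rw [h1, h2, h3]
  rw [Finset.sum_congr rfl (fun a _ => by rw [Nat.card_Ico]; omega : ∀ a ∈ S, (Finset.Ico a (a + q)).card = q)]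
  rw [Finset.sum_const, smul_eq_mul, Nat.mul_comm]

include hq hbd hsep in
lemma card_compat_s9 :
    (Finset.univ.filter fun π : Equiv.Perm (Fin n) => ∀ a ∈ S, isAdjCycle q π a).card
      = (n - q * S.card).factorial := by
  rw [← Fintype.card_subtype]
  have e1 : {π : Equiv.Perm (Fin n) // ∀ a ∈ S, isAdjCycle q π a}
      ≃ {π : Equiv.Perm (Fin n) // ∀ i : Fin n, inU q S i.val → π i = sig q n S i} :=
    Equiv.subtypeEquivRight (fun π => agree_iff hq hbd hsep π)
  have e2 : {π : Equiv.Perm (Fin n) // ∀ i : Fin n, inU q S i.val → π i = sig q n S i}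
      ≃ {τ : Equiv.Perm (Fin n) // ∀ i : Fin n, inU q S i.val → τ i = i} := by
    apply Equiv.subtypeEquiv (Equiv.mulLeft (sigPerm hq hbd hsep)⁻¹)
    intro π
    simp only [Equiv.coe_mulLeft, Equiv.Perm.mul_apply]
    constructor
    · intro h i hi
      rw [h i hi, ← sigPerm_apply hq hbd hsep, Equiv.Perm.inv_def, Equiv.symm_apply_apply]
    · intro h i hi
      have := h i hi
      have h2 := congrArg (sigPerm hq hbd hsep) this
      rw [Equiv.Perm.inv_def, Equiv.apply_symm_apply] at h2
      rw [← sigPerm_apply hq hbd hsep (i := i)]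
      exact h2
  have e3 : {τ : Equiv.Perm (Fin n) // ∀ i : Fin n, inU q S i.val → τ i = i}
      ≃ {τ : Equiv.Perm (Fin n) // ∀ i : Fin n, ¬ ¬ inU q S i.val → τ i = i} :=
    Equiv.subtypeEquivRight (fun τ => by
      constructor
      · intro h i hi; exact h i (not_not.mp hi)
      · intro h i hi; exact h i (not_not.mpr hi))
  have e4 := (Equiv.Perm.subtypeEquivSubtypePerm (fun i : Fin n => ¬ inU q S i.val)).symm
  rw [Fintype.card_congr (((e1.trans e2).trans e3).trans e4), Fintype.card_perm]
  congr 1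
  rw [Fintype.card_subtype_compl, Fintype.card_fin, Fintype.card_subtype, card_inU_aux hq hbd hsep]

end compat

lemma card_incompat {q n : ℕ} {S : Finset ℕ} (hq : 1 ≤ q) (hsub : S ⊆ range n)
    (hS : S ∉ compS q n) :
    (Finset.univ.filter fun π : Equiv.Perm (Fin n) => ∀ a ∈ S, isAdjCycle q π a).card = 0 := by
  rw [Finset.card_eq_zero, Finset.filter_eq_empty_iff]
  intro π _
  intro h
  apply hS
  rw [mem_compS]
  refine ⟨hsub, fun a ha => (h a ha).1, ?_⟩
  intro a ha c hc hac
  by_contra hlt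
  have hA := h a ha
  have hC := h c hc
  have hi : a + q - 1 < n := by have := hA.1; omega
  set i : Fin n := ⟨a + q - 1, hi⟩ with hidef
  have h1 := hA.2 i (by simp [hidef]; omega) (by simp [hidef]; omega)
  have h2 := hC.2 i (by simp [hidef]; omega) (by simp [hidef]; omega)
  rw [if_pos (by simp [hidef])] at h1
  rw [if_neg (by simp [hidef]; omega)] at h2
  simp [hidef] at h1 h2
  omega

lemma incl_excl {q : ℕ} (hq : 1 ≤ q) (n : ℕ) :
    (b q n : ℤ) = ∑ S ∈ compS q n, (-1 : ℤ) ^ S.card * ((n - q * S.card).factorial : ℤ) := by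
  have hb : b q n
      = (Finset.univ.filter fun π : Equiv.Perm (Fin n) =>
          (range n).filter (isAdjCycle q π) = ∅).card := by
    unfold b numAqC adjCycleCount
    congr 1
    apply Finset.filter_congr
    intro π _
    rw [Finset.card_eq_zero]
  rw [hb]
  have h0 : (((Finset.univ.filter fun π : Equiv.Perm (Fin n) =>
        (range n).filter (isAdjCycle q π) = ∅).card : ℤ))
      = ∑ π : Equiv.Perm (Fin n),
          (if (range n).filter (isAdjCycle q π) = ∅ then (1 : ℤ) else 0) :=
    (Finset.sum_boole _ _).symm
  rw [h0]
  have step1 : ∀ π : Equiv.Perm (Fin n),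
      (if (range n).filter (isAdjCycle q π) = ∅ then (1 : ℤ) else 0)
        = ∑ S ∈ ((range n).filter (isAdjCycle q π)).powerset, (-1 : ℤ) ^ S.card := by
    intro π
    rw [Finset.sum_powerset_neg_one_pow_card]
  have step2 : ∀ π : Equiv.Perm (Fin n),
      ((range n).filter (isAdjCycle q π)).powerset
        = (range n).powerset.filter (fun S => ∀ a ∈ S, isAdjCycle q π a) := by
    intro π
    ext S
    simp only [Finset.mem_powerset, Finset.mem_filter, Finset.mem_powerset]
    constructor
    · intro h
      constructor
      · exact h.trans (Finset.filter_subset _ _)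
      · intro a ha
        exact (Finset.mem_filter.mp (h ha)).2
    · rintro ⟨h1, h2⟩
      intro a ha
      exact Finset.mem_filter.mpr ⟨h1 ha, h2 a ha⟩
  rw [Finset.sum_congr rfl (fun π _ => (step1 π).trans (by rw [step2 π, Finset.sum_filter]))]
  rw [Finset.sum_comm]
  have inner : ∀ S ∈ (range n).powerset,
      (∑ π : Equiv.Perm (Fin n), if ∀ a ∈ S, isAdjCycle q π a then (-1 : ℤ) ^ S.card else 0)
        = (-1 : ℤ) ^ S.card *
            ((Finset.univ.filter fun π : Equiv.Perm (Fin n) => ∀ a ∈ S, isAdjCycle q π a).card : ℤ) := by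
    intro S _
    rw [← Finset.sum_filter, Finset.sum_const, nsmul_eq_mul, mul_comm]
  rw [Finset.sum_congr rfl inner]
  have hsub : compS q n ⊆ (range n).powerset := Finset.filter_subset _ _
  rw [← Finset.sum_subset hsub ?hz]
  case hz =>
    intro S hS hS2
    rw [card_incompat hq (Finset.mem_powerset.mp hS) hS2]
    push_cast
    ring
  apply Finset.sum_congr rfl
  intro S hS
  obtain ⟨_, hbd, hsep⟩ := mem_compS.mp hS
  rw [card_compat_s9 hq hbd hsep]


theorem stmt9 (q n : ℕ) (hq : 1 ≤ q) (hn : q ≤ n) :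
    (b q n : ℤ) - (n : ℤ) * (b q (n - 1) : ℤ) =
      ((q : ℤ) - 1) * (b q (n - q) : ℤ) +
        if q ∣ n then (q : ℤ) * (-1 : ℤ) ^ (n / q) else 0 := by
  have conv : ∀ m : ℕ, (b q m : ℤ) = ∑ j ∈ range (m + 1), g q m j := by
    intro m
    rw [incl_excl hq m, comp_sum hq m (fun j => (-1 : ℤ) ^ j * ((m - q * j).factorial : ℤ))]
    apply Finset.sum_congr rfl
    intro j _
    simp only [g]
    rw [Nat.mul_comm q j]
    ring
  rw [conv n, conv (n - 1), conv (n - q),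
    show n - 1 + 1 = n from by omega]
  linear_combination Brec hq hn
end
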